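/- arXiv:1209.4255 — 4 statements merged into one kernel-verified Lean document; each statement's English description precedes it below -/
import Mathlib

section
/- For all integers μ ≥ 1 and ε ≥ 1 with ε ≤ μ, the inequality ∑_{i=0}^{ε} ∑_{j=0}^{ε} C(μ,i)·C(μ,j) > ∑_{i=0}^{ε} ∑_{j=0}^{ε} C(μ-1,i)·C(μ+1,j) holds, i.e., the sequence μ ↦ S_μ(ε) := ∑_{i=0}^{ε} C(μ,i) satisfies S_μ(ε)² > S_{μ-1}(ε)·S_{μ+1}(ε). -/
open Finset

lemma sum_choose_succ_aux (m n : ℕ) :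
    ∑ i ∈ range (n + 1), (m + 1).choose i =
      ∑ i ∈ range (n + 1), m.choose i + ∑ i ∈ range n, m.choose i := by
  induction n with
  | zero => simp
  | succ n ih =>
    rw [sum_range_succ, ih, Nat.choose_succ_succ,
      sum_range_succ (fun i => m.choose i) (n + 1),
      sum_range_succ (fun i => m.choose i) n]
    ring

lemma choose_pred_id (μ k : ℕ) (hμ : 1 ≤ μ) :
    μ * (μ - 1).choose k = (μ - k) * μ.choose k := by
  obtain ⟨n, rfl⟩ := Nat.exists_eq_add_of_le hμ
  simp only [Nat.add_sub_cancel_left] at *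
  rw [add_comm 1 n, Nat.add_one_mul_choose_eq, Nat.choose_succ_right_eq, mul_comm]

lemma key (μ ε : ℕ) (hμ : 1 ≤ μ) (hε : 1 ≤ ε) (hεμ : ε ≤ μ) :
    (μ - 1).choose ε * (∑ i ∈ range (ε + 1), μ.choose i) <
      (∑ i ∈ range (ε + 1), (μ - 1).choose i) * μ.choose ε := by
  rcases eq_or_lt_of_le hεμ with rfl | hlt
  · rw [Nat.choose_eq_zero_of_lt (by omega), zero_mul]
    have h1 : 0 < ∑ i ∈ range (ε + 1), (ε - 1).choose i := by
      apply sum_pos' (fun i _ => Nat.zero_le _)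
      exact ⟨0, mem_range.mpr (by omega), by simp⟩
    have h2 : 0 < ε.choose ε := by simp
    positivity
  · rw [mul_sum, sum_mul]
    apply sum_lt_sum
    · intro i hi
      have hi' : i ≤ ε := by simpa [Nat.lt_succ_iff] using mem_range.mp hi
      refine Nat.le_of_mul_le_mul_left ?_ (show 0 < μ by omega)
      calc μ * ((μ - 1).choose ε * μ.choose i)
          = (μ * (μ - 1).choose ε) * μ.choose i := by ring
        _ = ((μ - ε) * μ.choose ε) * μ.choose i := by rw [choose_pred_id μ ε hμ]
        _ ≤ ((μ - i) * μ.choose i) * μ.choose ε := by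
            rw [mul_assoc, mul_assoc]
            exact Nat.mul_le_mul (by omega) (by rw [mul_comm])
        _ = (μ * (μ - 1).choose i) * μ.choose ε := by rw [choose_pred_id μ i hμ]
        _ = μ * ((μ - 1).choose i * μ.choose ε) := by ring
    · refine ⟨0, mem_range.mpr (by omega), ?_⟩
      simp only [Nat.choose_zero_right, mul_one, one_mul]
      have h1 : μ.choose ε = (μ - 1).choose (ε - 1) + (μ - 1).choose ε := by
        rw [show μ = (μ - 1) + 1 by omega, show ε = (ε - 1) + 1 by omega,
          Nat.choose_succ_succ]
        simp [show (ε - 1) + 1 - 1 = ε - 1 by omega,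
          show (μ - 1) + 1 - 1 = μ - 1 by omega]
      have h2 : 0 < (μ - 1).choose (ε - 1) := Nat.choose_pos (by omega)
      omega

theorem stmt_0 (μ ε : ℕ) (hμ : 1 ≤ μ) (hε : 1 ≤ ε) (hεμ : ε ≤ μ) :
    (∑ i ∈ Finset.range (ε + 1), μ.choose i) ^ 2 >
      (∑ i ∈ Finset.range (ε + 1), (μ - 1).choose i) *
        (∑ i ∈ Finset.range (ε + 1), (μ + 1).choose i) := by
  set A := ∑ i ∈ range (ε + 1), (μ - 1).choose i with hA
  set B := ∑ i ∈ range (ε + 1), μ.choose i with hB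
  set C := ∑ i ∈ range (ε + 1), (μ + 1).choose i with hC
  set T := ∑ i ∈ range ε, (μ - 1).choose i with hT
  set T' := ∑ i ∈ range ε, μ.choose i with hT'
  have hBAT : B = A + T := by
    rw [hB, hA, hT, show μ = (μ - 1) + 1 by omega]
    exact sum_choose_succ_aux (μ - 1) ε
  have hCBT : C = B + T' := sum_choose_succ_aux μ ε
  have hATa : A = T + (μ - 1).choose ε := sum_range_succ _ _
  have hBTc : B = T' + μ.choose ε := sum_range_succ _ _
  have hkey := key μ ε hμ hε hεμ
  have e1 : A * B = A * T' + A * μ.choose ε := by rw [hBTc]; ring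
  have e2 : A * B = T * B + (μ - 1).choose ε * B := by rw [hATa]; ring
  have hTB : A * T' < T * B := by
    have h : A * T' + (μ - 1).choose ε * B < T * B + (μ - 1).choose ε * B := by
      calc A * T' + (μ - 1).choose ε * B < A * T' + A * μ.choose ε :=
            Nat.add_lt_add_left hkey _
        _ = T * B + (μ - 1).choose ε * B := by rw [← e1, e2]
    exact Nat.lt_of_add_lt_add_right h
  calc A * C = A * B + A * T' := by rw [hCBT]; ring
    _ < A * B + T * B := Nat.add_lt_add_left hTB _
    _ = B ^ 2 := by rw [hBAT]; ring
end

section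
/- If t is the mode of the sequence a_μ = 2^{-μ/2} ∑_{i=0}^{ε} C(μ,i) (for fixed ε ≥ 1), then (1+√2)ε − 1 ≤ t ≤ (2+√2)ε. -/
open Finset Real

private lemma pascal_sum (μ ε : ℕ) :
    (∑ i ∈ range (ε+1), (μ+1).choose i) + μ.choose ε
      = 2 * ∑ i ∈ range (ε+1), μ.choose i := by
  induction ε with
  | zero => simp
  | succ e ih =>
      rw [sum_range_succ, sum_range_succ (f := fun i => μ.choose i)]
      have h : (μ+1).choose (e+1) = μ.choose e + μ.choose (e+1) :=
        Nat.choose_succ_succ μ e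
      omega

private lemma incr_aux (ε : ℕ) (hε : 1 ≤ ε) (μ : ℕ)
    (h : (μ:ℝ) + 1 < (Real.sqrt 2 + 1) * ε) :
    (μ.choose ε : ℝ) < (2 - Real.sqrt 2) * ∑ i ∈ range (ε+1), (μ.choose i : ℝ) := by
  set s := Real.sqrt 2 with hsdef
  have hs2 : s^2 = 2 := Real.sq_sqrt (by norm_num)
  have hs0 : 0 ≤ s := Real.sqrt_nonneg 2
  have hs1 : 1 < s := by nlinarith
  have hs32 : s < 2 := by nlinarith
  have hSpos : (0:ℝ) < ∑ i ∈ range (ε+1), (μ.choose i : ℝ) := by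
    have h0 : ((μ.choose 0 : ℕ) : ℝ) ≤ ∑ i ∈ range (ε+1), (μ.choose i : ℝ) :=
      Finset.single_le_sum (f := fun i => ((μ.choose i : ℕ) : ℝ))
        (fun i _ => by positivity) (by simp)
    simpa using lt_of_lt_of_le one_pos (by simpa using h0)
  rcases lt_or_ge μ ε with hlt | hge
  · rw [Nat.choose_eq_zero_of_lt hlt]
    push_cast
    nlinarith
  · -- ε ≤ μ
    set C : ℝ := (μ.choose ε : ℝ) with hCdef
    set C' : ℝ := (μ.choose (ε-1) : ℝ) with hC'def
    have hCpos : 0 < C := by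
      have := Nat.choose_pos hge
      positivity
    have hC'pos : 0 ≤ C' := by positivity
    have hid : C * ε = C' * ((μ:ℝ) - (ε - 1)) := by
      have h1 := Nat.choose_succ_right_eq μ (ε-1)
      have h2 : ε - 1 + 1 = ε := by omega
      rw [h2] at h1
      have h3 : ((μ.choose ε * ε : ℕ) : ℝ) = ((μ.choose (ε-1) * (μ - (ε-1)) : ℕ) : ℝ) := by
        exact_mod_cast congrArg (Nat.cast : ℕ → ℝ) h1
      push_cast [Nat.cast_sub (show ε - 1 ≤ μ by omega), Nat.cast_sub hε] at h3
      linarith [h3]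
    have hεμ : (ε:ℝ) ≤ (μ:ℝ) := by exact_mod_cast hge
    have hD : (0:ℝ) < (μ:ℝ) - ε + 1 := by linarith
    have hs1' : (0:ℝ) < s - 1 := by linarith
    have key : (μ:ℝ) - ε + 1 < (2 - s) * ((μ:ℝ) + 1) := by
      have P := mul_lt_mul_of_pos_left h hs1'
      have hse : (s-1)*((s+1)*(ε:ℝ)) = (ε:ℝ) := by linear_combination (ε:ℝ) * hs2
      nlinarith [P, hse]
    have hsum : C' + C ≤ ∑ i ∈ range (ε+1), (μ.choose i : ℝ) := by
      have hsub : ({ε-1, ε} : Finset ℕ) ⊆ range (ε+1) := by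
        intro x hx
        simp only [Finset.mem_insert, Finset.mem_singleton] at hx
        rcases hx with rfl | rfl <;> simp [Finset.mem_range] <;> omega
      have hne : ε - 1 ≠ ε := by omega
      calc C' + C = ∑ i ∈ ({ε-1, ε} : Finset ℕ), (μ.choose i : ℝ) := by
            rw [Finset.sum_pair hne]
        _ ≤ ∑ i ∈ range (ε+1), (μ.choose i : ℝ) :=
            Finset.sum_le_sum_of_subset_of_nonneg hsub (fun i _ _ => by positivity)
    have h3 : C < (2-s) * (C' + C) := by
      rw [← mul_lt_mul_iff_of_pos_right hD]
      calc C * ((μ:ℝ) - ε + 1) < C * ((2-s) * ((μ:ℝ)+1)) :=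
            mul_lt_mul_of_pos_left key hCpos
        _ = (2-s) * (C' + C) * ((μ:ℝ) - ε + 1) := by linear_combination (2-s) * hid
    calc C < (2-s) * (C' + C) := h3
      _ ≤ (2-s) * ∑ i ∈ range (ε+1), (μ.choose i : ℝ) :=
          mul_le_mul_of_nonneg_left hsum (by linarith)

private lemma decr_aux (ε : ℕ) (hε : 1 ≤ ε) (μ : ℕ) (h2ε : 2*ε ≤ μ)
    (h : (2 + Real.sqrt 2) * ε < (μ:ℝ) + 1) :
    (2 - Real.sqrt 2) * ∑ i ∈ range (ε+1), (μ.choose i : ℝ) < (μ.choose ε : ℝ) := by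
  set s := Real.sqrt 2 with hsdef
  have hs2 : s^2 = 2 := Real.sq_sqrt (by norm_num)
  have hs0 : 0 ≤ s := Real.sqrt_nonneg 2
  have hs1 : 1 < s := by nlinarith
  have hs32 : s < 2 := by nlinarith
  have hεμ : ε ≤ μ := by omega
  have hεμR : (ε:ℝ) ≤ (μ:ℝ) := by exact_mod_cast hεμ
  have h2εR : (2:ℝ)*ε ≤ (μ:ℝ) := by exact_mod_cast h2ε
  set D : ℝ := (μ:ℝ) - ε + 1 with hDdef
  have hD : (0:ℝ) < D := by simp only [hDdef]; linarith
  set r : ℝ := (ε:ℝ) / D with hrdef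
  have hr0 : 0 ≤ r := by positivity
  have hr1 : r < 1 := by
    rw [hrdef, div_lt_one hD]
    simp only [hDdef]
    have : (1:ℝ) ≤ (ε:ℝ) := by exact_mod_cast hε
    linarith
  set C : ℝ := (μ.choose ε : ℝ) with hCdef
  have hCpos : 0 < C := by
    have := Nat.choose_pos hεμ
    positivity
  have hterm : ∀ k, k ≤ ε → (μ.choose (ε-k) : ℝ) ≤ C * r^k := by
    intro k
    induction k with
    | zero => intro _; simp [hCdef]
    | succ k ih =>
        intro hk
        have hk' : k ≤ ε := by omega
        have ihk := ih hk'
        have hj1 : 1 ≤ ε - k := by omega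
        have hjε : ε - k ≤ ε := by omega
        have hjεR : ((ε - k : ℕ):ℝ) ≤ (ε:ℝ) := by exact_mod_cast hjε
        have hid : (μ.choose (ε-k) : ℝ) * ((ε-k:ℕ):ℝ)
            = (μ.choose (ε-k-1) : ℝ) * ((μ:ℝ) - (((ε-k:ℕ):ℝ) - 1)) := by
          have h1 := Nat.choose_succ_right_eq μ (ε-k-1)
          have h2 : ε - k - 1 + 1 = ε - k := by omega
          rw [h2] at h1
          have h3 : ((μ.choose (ε-k) * (ε-k) : ℕ) : ℝ)
              = ((μ.choose (ε-k-1) * (μ - (ε-k-1)) : ℕ) : ℝ) := by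
            exact_mod_cast congrArg (Nat.cast : ℕ → ℝ) h1
          push_cast [Nat.cast_sub (show ε - k - 1 ≤ μ by omega),
            Nat.cast_sub (show 1 ≤ ε - k from hj1)] at h3
          push_cast
          linarith [h3]
        have hDle : D ≤ (μ:ℝ) - (((ε-k:ℕ):ℝ) - 1) := by
          simp only [hDdef]; linarith
        have h1 : (μ.choose (ε-k-1):ℝ) * D ≤ C * r^k * ε := by
          calc (μ.choose (ε-k-1):ℝ) * D
              ≤ (μ.choose (ε-k-1):ℝ) * ((μ:ℝ) - (((ε-k:ℕ):ℝ) - 1)) :=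
                mul_le_mul_of_nonneg_left hDle (by positivity)
            _ = (μ.choose (ε-k) : ℝ) * ((ε-k:ℕ):ℝ) := hid.symm
            _ ≤ (C * r^k) * (ε:ℝ) :=
                mul_le_mul ihk hjεR (by positivity) (by positivity)
        have h2 : (μ.choose (ε-k-1):ℝ) ≤ C * r^k * ε / D := (le_div_iff₀ hD).mpr h1
        have h3 : C * r^(k+1) = C * r^k * (ε:ℝ) / D := by
          rw [pow_succ, hrdef]; ring
        have h4 : ε - (k+1) = ε - k - 1 := by omega
        rw [h4, h3]
        exact h2
  have hS : ∑ i ∈ range (ε+1), (μ.choose i : ℝ) ≤ C * ∑ k ∈ range (ε+1), r^k := by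
    have hrefl := Finset.sum_range_reflect (fun i => (μ.choose i : ℝ)) (ε+1)
    simp only [Nat.add_sub_cancel] at hrefl
    rw [← hrefl, Finset.mul_sum]
    refine Finset.sum_le_sum (fun k hk => ?_)
    have : k ≤ ε := by
      have := Finset.mem_range.mp hk; omega
    exact hterm k this
  have h1r : (0:ℝ) < 1 - r := by linarith
  have hg : ∑ k ∈ range (ε+1), r^k ≤ 1/(1-r) := by
    rw [le_div_iff₀ h1r]
    have hgm : (∑ k ∈ range (ε+1), r^k) * (1-r) = 1 - r^(ε+1) := by
      linear_combination -(geom_sum_mul r (ε+1))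
    have := pow_nonneg hr0 (ε+1)
    linarith
  have hSb : ∑ i ∈ range (ε+1), (μ.choose i : ℝ) ≤ C / (1-r) := by
    calc ∑ i ∈ range (ε+1), (μ.choose i : ℝ) ≤ C * ∑ k ∈ range (ε+1), r^k := hS
      _ ≤ C * (1/(1-r)) := mul_le_mul_of_nonneg_left hg (le_of_lt hCpos)
      _ = C / (1-r) := by ring
  have hs1' : (0:ℝ) < s - 1 := by linarith
  have key : (2 - s) * D < (μ:ℝ) - 2*ε + 1 := by
    have P := mul_lt_mul_of_pos_left h hs1'
    have hse : (s-1)*((2+s)*(ε:ℝ)) = s * (ε:ℝ) := by linear_combination (ε:ℝ) * hs2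
    simp only [hDdef]
    nlinarith [P, hse]
  have h1rD : 1 - r = ((μ:ℝ) - 2*ε + 1) / D := by
    rw [hrdef]
    field_simp
    simp only [hDdef]
    ring
  have hlast : (2-s) < 1 - r := by
    rw [h1rD, lt_div_iff₀ hD]
    exact key
  calc (2-s) * ∑ i ∈ range (ε+1), (μ.choose i : ℝ)
      ≤ (2-s) * (C/(1-r)) := mul_le_mul_of_nonneg_left hSb (by linarith)
    _ < C := by
        rw [mul_div_assoc' (2-s) C (1-r), div_lt_iff₀ h1r]
        nlinarith [mul_pos hCpos (show (0:ℝ) < (1-r) - (2-s) by linarith)]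

theorem stmt_11 (ε : ℕ) (hε : 1 ≤ ε) (a : ℕ → ℝ)
    (ha : ∀ μ : ℕ, a μ =
      (2 : ℝ) ^ (-(μ : ℝ) / 2) * ∑ i ∈ Finset.range (ε + 1), (μ.choose i : ℝ))
    (t : ℕ) (ht : 1 ≤ t) (hmode : ∀ μ : ℕ, 1 ≤ μ → a μ ≤ a t) :
    (1 + Real.sqrt 2) * (ε : ℝ) - 1 ≤ (t : ℝ) ∧
      (t : ℝ) ≤ (2 + Real.sqrt 2) * (ε : ℝ) := by
  set s := Real.sqrt 2 with hsdef
  have hs2 : s^2 = 2 := Real.sq_sqrt (by norm_num)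
  have hs0 : 0 ≤ s := Real.sqrt_nonneg 2
  have hs1 : 1 < s := by nlinarith
  have hs32 : s < 2 := by nlinarith
  have hεR : (1:ℝ) ≤ (ε:ℝ) := by exact_mod_cast hε
  have hpos : ∀ μ:ℕ, (0:ℝ) < (2:ℝ)^(-(μ:ℝ)/2) :=
    fun μ => Real.rpow_pos_of_pos two_pos _
  have hSpos : ∀ μ:ℕ, (0:ℝ) < ∑ i ∈ range (ε+1), (μ.choose i : ℝ) := by
    intro μ
    have h0 : ((μ.choose 0 : ℕ) : ℝ) ≤ ∑ i ∈ range (ε+1), (μ.choose i : ℝ) :=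
      Finset.single_le_sum (f := fun i => ((μ.choose i : ℕ) : ℝ))
        (fun i _ => by positivity) (by simp)
    simpa using lt_of_lt_of_le one_pos (by simpa using h0)
  have hScast : ∀ μ:ℕ, ∑ i ∈ range (ε+1), ((μ+1).choose i : ℝ)
      = 2 * (∑ i ∈ range (ε+1), (μ.choose i : ℝ)) - (μ.choose ε : ℝ) := by
    intro μ
    have := pascal_sum μ ε
    have h3 : ((∑ i ∈ range (ε+1), (μ+1).choose i : ℕ) : ℝ) + ((μ.choose ε : ℕ):ℝ)
        = 2 * ((∑ i ∈ range (ε+1), μ.choose i : ℕ) : ℝ) := by exact_mod_cast this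
    push_cast at h3
    linarith
  have hmul : ∀ μ:ℕ, a (μ+1) * s
      = (2:ℝ)^(-(μ:ℝ)/2) * (2 * (∑ i ∈ range (ε+1), (μ.choose i : ℝ)) - (μ.choose ε : ℝ)) := by
    intro μ
    rw [ha (μ+1)]
    have hpow : (2:ℝ)^(-((μ:ℝ)+1)/2) * s = (2:ℝ)^(-(μ:ℝ)/2) := by
      rw [hsdef, Real.sqrt_eq_rpow, ← Real.rpow_add two_pos,
        show -((μ:ℝ)+1)/2 + 1/2 = -(μ:ℝ)/2 by ring]
    push_cast
    rw [hScast μ]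
    calc (2:ℝ)^(-((μ:ℝ)+1)/2) * (2 * (∑ i ∈ range (ε+1), (μ.choose i : ℝ)) - (μ.choose ε : ℝ)) * s
        = ((2:ℝ)^(-((μ:ℝ)+1)/2) * s) * (2 * (∑ i ∈ range (ε+1), (μ.choose i : ℝ)) - (μ.choose ε : ℝ)) := by ring
      _ = (2:ℝ)^(-(μ:ℝ)/2) * (2 * (∑ i ∈ range (ε+1), (μ.choose i : ℝ)) - (μ.choose ε : ℝ)) := by rw [hpow]
  constructor
  · by_contra h'
    push_neg at h'
    have hcond : (t:ℝ) + 1 < (s + 1) * ε := by linarith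
    have hincr := incr_aux ε hε t hcond
    have hlt : a t < a (t+1) := by
      have hs' : (0:ℝ) < s := by linarith
      rw [← mul_lt_mul_iff_of_pos_right hs', hmul t, ha t]
      have hfac : (∑ i ∈ range (ε+1), (t.choose i : ℝ)) * s
          < 2 * (∑ i ∈ range (ε+1), (t.choose i : ℝ)) - (t.choose ε : ℝ) := by
        nlinarith [hincr]
      calc (2:ℝ)^(-(t:ℝ)/2) * (∑ i ∈ range (ε+1), (t.choose i : ℝ)) * s
          = (2:ℝ)^(-(t:ℝ)/2) * ((∑ i ∈ range (ε+1), (t.choose i : ℝ)) * s) := by ring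
        _ < (2:ℝ)^(-(t:ℝ)/2) * (2 * (∑ i ∈ range (ε+1), (t.choose i : ℝ)) - (t.choose ε : ℝ)) :=
            mul_lt_mul_of_pos_left hfac (hpos t)
    exact absurd (hmode (t+1) (by omega)) (not_le.mpr hlt)
  · by_contra h'
    push_neg at h'
    have ht3 : (3:ℝ) < (t:ℝ) := by nlinarith
    have ht4 : 2 ≤ t := by
      by_contra hc
      push_neg at hc
      interval_cases t <;> norm_num at ht3
    set μ := t - 1 with hμdef
    have hμt : μ + 1 = t := by omega
    have hμ1 : 1 ≤ μ := by omega
    have hμR : (μ:ℝ) + 1 = (t:ℝ) := by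
      rw [← hμt]; push_cast; ring
    have hcond : (2 + s) * ε < (μ:ℝ) + 1 := by rw [hμR]; exact h'
    have h2ε : 2*ε ≤ μ := by
      have : (2:ℝ)*ε < (μ:ℝ) := by nlinarith [hεR]
      have : (2*ε : ℕ) < μ := by exact_mod_cast this
      omega
    have hdecr := decr_aux ε hε μ h2ε hcond
    have hlt : a (μ+1) < a μ := by
      have hs' : (0:ℝ) < s := by linarith
      rw [← mul_lt_mul_iff_of_pos_right hs', hmul μ, ha μ]
      have hfac : 2 * (∑ i ∈ range (ε+1), (μ.choose i : ℝ)) - (μ.choose ε : ℝ)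
          < (∑ i ∈ range (ε+1), (μ.choose i : ℝ)) * s := by
        nlinarith [hdecr]
      calc (2:ℝ)^(-(μ:ℝ)/2) * (2 * (∑ i ∈ range (ε+1), (μ.choose i : ℝ)) - (μ.choose ε : ℝ))
          < (2:ℝ)^(-(μ:ℝ)/2) * ((∑ i ∈ range (ε+1), (μ.choose i : ℝ)) * s) :=
            mul_lt_mul_of_pos_left hfac (hpos μ)
        _ = (2:ℝ)^(-(μ:ℝ)/2) * (∑ i ∈ range (ε+1), (μ.choose i : ℝ)) * s := by ring
    rw [hμt] at hlt
    exact absurd (hmode μ hμ1) (not_le.mpr hlt)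
end

section
/- Any subset A of Z₂ⁿ with diameter at most 2s (where 2s < n−1) satisfies |A| ≤ ∑_{i=0}^{s} C(n,i), i.e., Hamming balls of radius s are the largest sets of diameter 2s. (Kleitman's theorem, even case.) -/
open Finset FinsetFamily
open scoped symmDiff

namespace Kleit

variable {F G : Finset (Finset ℕ)} {A B X Y : Finset ℕ} {i j n k t d s : ℕ}

def Sized' (n k : ℕ) (F : Finset (Finset ℕ)) : Prop := ∀ X ∈ F, X ⊆ range n ∧ X.card = k
def Inter (t : ℕ) (F : Finset (Finset ℕ)) : Prop := ∀ X ∈ F, ∀ Y ∈ F, t ≤ (X ∩ Y).card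
def Diam (d : ℕ) (F : Finset (Finset ℕ)) : Prop := ∀ A ∈ F, ∀ B ∈ F, (A ∆ B).card ≤ d

lemma compress_single (hij : i ≠ j) (hiA : i ∉ A) (hjA : j ∈ A) :
    UV.compress {i} {j} A = insert i (A.erase j) := by
  rw [UV.compress_of_disjoint_of_le (by simpa using hiA) (by simpa using hjA)]
  ext x
  simp only [mem_sdiff, mem_union, mem_singleton, mem_insert, mem_erase, sup_eq_union]
  constructor
  · rintro ⟨h1 | h2, h3⟩
    · exact Or.inr ⟨h3, h1⟩
    · exact Or.inl h2
  · rintro (rfl | ⟨h1, h2⟩)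
    · exact ⟨Or.inr rfl, hij⟩
    · exact ⟨Or.inl h2, h1⟩

lemma compress_single_cond (h : UV.compress {i} {j} A ≠ A) : i ∉ A ∧ j ∈ A := by
  rw [UV.compress] at h
  split_ifs at h with hc
  · exact ⟨by simpa using hc.1, by simpa using hc.2⟩
  · exact absurd rfl h

lemma huv_single (i j : ℕ) (F : Finset (Finset ℕ)) :
    ∀ x ∈ ({i} : Finset ℕ), ∃ y ∈ ({j} : Finset ℕ),
      UV.IsCompressed (({i} : Finset ℕ).erase x) (({j} : Finset ℕ).erase y) F := by
  intro x hx
  refine ⟨j, mem_singleton_self j, ?_⟩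
  rw [mem_singleton.1 hx, erase_singleton, erase_singleton]
  exact UV.isCompressed_self _ _

lemma huv_down (i : ℕ) (F : Finset (Finset ℕ)) :
    ∀ x ∈ (∅ : Finset ℕ), ∃ y ∈ ({i} : Finset ℕ),
      UV.IsCompressed ((∅ : Finset ℕ).erase x) (({i} : Finset ℕ).erase y) F :=
  fun x hx => absurd hx (notMem_empty x)

lemma shadow_iterate_compression_subset
    (hw : ∀ G : Finset (Finset ℕ), ∂ (UV.compression A B G) ⊆ UV.compression A B (∂ G)) (t : ℕ) :
    ∀ F, ∂^[t] (UV.compression A B F) ⊆ UV.compression A B (∂^[t] F) := by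
  induction t with
  | zero => intro F; simp
  | succ t ih =>
    intro F
    rw [Function.iterate_succ_apply, Function.iterate_succ_apply]
    exact (shadow_monotone.iterate t (hw F)).trans (ih (∂ F))

lemma card_shadow_iterate_single_le (t : ℕ) (F : Finset (Finset ℕ)) :
    (∂^[t] (UV.compression {i} {j} F)).card ≤ (∂^[t] F).card := by
  refine le_trans (card_le_card (shadow_iterate_compression_subset ?_ t F)) ?_
  · intro G
    exact UV.shadow_compression_subset_compression_shadow _ _ (huv_single i j G)
  · exact (UV.card_compression _ _ _).le

/-- membership in a single shift -/
lemma mem_shift_cases (hij : i ≠ j) (hA : A ∈ UV.compression {i} {j} F) :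
    A ∈ F ∨ (i ∈ A ∧ j ∉ A ∧ insert j (A.erase i) ∈ F) := by
  by_cases hAF : A ∈ F
  · exact Or.inl hAF
  · have h1 : i ∈ A := by
      simpa using UV.le_of_mem_compression_of_notMem hA hAF
    have h2 : j ∉ A := by
      simpa using UV.disjoint_of_mem_compression_of_notMem hA hAF
    have h3 := UV.sup_sdiff_mem_of_mem_compression_of_notMem hA hAF
    refine Or.inr ⟨h1, h2, ?_⟩
    convert h3 using 1
    ext x
    simp only [mem_insert, mem_erase, mem_sdiff, sup_eq_union, mem_union, mem_singleton]
    constructor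
    · rintro (rfl | ⟨h4, h5⟩)
      · exact ⟨Or.inr rfl, fun h => hij h.symm⟩
      · exact ⟨Or.inl h5, h4⟩
    · rintro ⟨h4 | rfl, h5⟩
      · exact Or.inr ⟨h5, h4⟩
      · exact Or.inl rfl


lemma sized_shift (hij : i < j) (hjn : j < n) (hF : Sized' n k F) :
    Sized' n k (UV.compression {i} {j} F) := by
  intro A hA
  rcases mem_shift_cases hij.ne hA with h | ⟨h1, h2, h3⟩
  · exact hF A h
  · obtain ⟨hs, hc⟩ := hF _ h3
    constructor
    · intro x hx
      by_cases hxi : x = i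
      · subst hxi; exact mem_range.2 (hij.trans hjn)
      · exact hs (mem_insert.2 (Or.inr (mem_erase.2 ⟨hxi, hx⟩)))
    · have : (insert j (A.erase i)).card = A.card := by
        rw [card_insert_of_notMem (fun hj => h2 (mem_erase.1 hj).2),
          card_erase_of_mem h1]
        have : 0 < A.card := card_pos.2 ⟨i, h1⟩
        omega
      omega

/-- the key fiddly lemma : shifts preserve t-intersecting -/
lemma inter_shift (hij : i ≠ j) (h : Inter t F) : Inter t (UV.compression {i} {j} F) := by
  -- helper : A is moved-form, B ∈ compression and B ∈ F
  have aux : ∀ A B, (i ∈ A ∧ j ∉ A ∧ insert j (A.erase i) ∈ F) →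
      B ∈ UV.compression {i} {j} F → B ∈ F → t ≤ (A ∩ B).card := by
    rintro A B ⟨hiA, hjA, hXF⟩ hBc hBF
    set X := insert j (A.erase i) with hX
    by_cases hjB : j ∈ B
    · by_cases hiB : i ∈ B
      · -- X ∩ B = insert j ((A ∩ B).erase i), i ∈ A∩B
        have hXB : X ∩ B = insert j ((A ∩ B).erase i) := by
          ext x
          simp only [hX, mem_inter, mem_insert, mem_erase]
          constructor
          · rintro ⟨rfl | ⟨h1, h2⟩, h3⟩
            · exact Or.inl rfl
            · exact Or.inr ⟨h1, h2, h3⟩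
          · rintro (rfl | ⟨h1, h2, h3⟩)
            · exact ⟨Or.inl rfl, hjB⟩
            · exact ⟨Or.inr ⟨h1, h2⟩, h3⟩
        have h1 := h X hXF B hBF
        rw [hXB] at h1
        have h2 : j ∉ (A ∩ B).erase i := fun hc => hjA (mem_inter.1 (erase_subset _ _ hc)).1
        rw [card_insert_of_notMem h2, card_erase_of_mem (mem_inter.2 ⟨hiA, hiB⟩)] at h1
        have h3 : 0 < (A ∩ B).card := card_pos.2 ⟨i, mem_inter.2 ⟨hiA, hiB⟩⟩
        omega
      · -- B kept: Y := insert i (B.erase j) ∈ F and A ∩ B = X ∩ Y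
        have hY : UV.compress {i} {j} B ∈ F := by
          rcases UV.mem_compression.1 hBc with h' | h'
          · exact h'.2
          · exact absurd hBF h'.1
        rw [compress_single hij hiB hjB] at hY
        have h1 := h X hXF _ hY
        have : X ∩ insert i (B.erase j) = A ∩ B := by
          ext x
          simp only [hX, mem_inter, mem_insert, mem_erase]
          constructor
          · rintro ⟨hx1, hx2⟩
            rcases hx1 with rfl | ⟨hxi, hxA⟩
            · rcases hx2 with h' | ⟨hxj, _⟩
              · exact absurd h' (Ne.symm hij)
              · exact absurd rfl hxj
            · rcases hx2 with h' | ⟨hxj, hxB⟩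
              · exact absurd h' hxi
              · exact ⟨hxA, hxB⟩
          · rintro ⟨h1, h2⟩
            have hxj : x ≠ j := fun hc => hjA (hc ▸ h1)
            have hxi : x ≠ i := fun hc => hiB (hc ▸ h2)
            exact ⟨Or.inr ⟨hxi, h1⟩, Or.inr ⟨hxj, h2⟩⟩
        rwa [this] at h1
    · -- j ∉ B : A ∩ B ⊇ (X ∩ B) minus nothing much: X ∩ B = (A∩B).erase i
      have hXB : X ∩ B = (A ∩ B).erase i := by
        ext x
        simp only [hX, mem_inter, mem_insert, mem_erase]
        constructor
        · rintro ⟨rfl | ⟨h1, h2⟩, h3⟩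
          · exact absurd h3 hjB
          · exact ⟨h1, h2, h3⟩
        · rintro ⟨h1, h2, h3⟩
          exact ⟨Or.inr ⟨h1, h2⟩, h3⟩
      have h1 := h X hXF B hBF
      rw [hXB] at h1
      exact h1.trans (card_le_card (erase_subset _ _))
  intro A hA B hB
  rcases mem_shift_cases hij hA with hAF | hAm
  · rcases mem_shift_cases hij hB with hBF | hBm
    · exact h A hAF B hBF
    · rw [inter_comm]; exact aux B A hBm hA hAF
  · rcases mem_shift_cases hij hB with hBF | hBm
    · exact aux A B hAm hB hBF
    · -- both moved : A ∩ B computed via X ∩ Y = insert j ((A∩B).erase i)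
      obtain ⟨hiA, hjA, hXF⟩ := hAm
      obtain ⟨hiB, hjB, hYF⟩ := hBm
      have h1 := h _ hXF _ hYF
      have : insert j (A.erase i) ∩ insert j (B.erase i) = insert j ((A ∩ B).erase i) := by
        ext x
        simp only [mem_inter, mem_insert, mem_erase]
        constructor
        · rintro ⟨rfl | ⟨h1, h2⟩, h3⟩
          · exact Or.inl rfl
          · rcases h3 with rfl | ⟨h4, h5⟩
            · exact Or.inl rfl
            · exact Or.inr ⟨h1, h2, h5⟩
        · rintro (rfl | ⟨h1, h2, h3⟩)
          · exact ⟨Or.inl rfl, Or.inl rfl⟩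
          · exact ⟨Or.inr ⟨h1, h2⟩, Or.inr ⟨h1, h3⟩⟩
      rw [this] at h1
      have h2 : j ∉ (A ∩ B).erase i := fun hc => hjA (mem_inter.1 (erase_subset _ _ hc)).1
      have h3 : i ∈ A ∩ B := mem_inter.2 ⟨hiA, hiB⟩
      rw [card_insert_of_notMem h2, card_erase_of_mem h3] at h1
      have : 0 < (A ∩ B).card := card_pos.2 ⟨i, h3⟩
      omega


/-- weight used for termination of shifting -/
def sumw (F : Finset (Finset ℕ)) : ℕ := ∑ X ∈ F, ∑ x ∈ X, x

lemma sumw_compression_lt (hij : i < j) (hne : UV.compression {i} {j} F ≠ F) :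
    sumw (UV.compression {i} {j} F) < sumw F := by
  classical
  have q : ∀ Q ∈ F.filter (fun A => UV.compress {i} {j} A ∉ F), UV.compress {i} {j} Q ≠ Q := by
    intro Q hQ hc
    rw [mem_filter] at hQ
    exact hQ.2 (by rw [hc]; exact hQ.1)
  have uA : F.filter (fun A => UV.compress {i} {j} A ∈ F) ∪
      F.filter (fun A => UV.compress {i} {j} A ∉ F) = F := filter_union_filter_not_eq _ _
  have ne₂ : (F.filter (fun A => UV.compress {i} {j} A ∉ F)).Nonempty := by
    refine nonempty_iff_ne_empty.2 fun z => hne ?_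
    rw [UV.compression, filter_image, z, image_empty, union_empty]
    rwa [z, union_empty] at uA
  rw [sumw, sumw, UV.compression, sum_union UV.compress_disjoint]
  conv_rhs => rw [← uA]
  rw [sum_union (disjoint_filter_filter_not _ _ _), add_lt_add_iff_left, filter_image,
    sum_image UV.compress_injOn]
  refine sum_lt_sum_of_nonempty ne₂ fun A hA => ?_
  obtain ⟨hiA, hjA⟩ := compress_single_cond (q A hA)
  rw [compress_single hij.ne hiA hjA, sum_insert (fun hc => hiA (mem_erase.1 hc).2)]
  have h2 : ∑ x ∈ A, x = j + ∑ x ∈ A.erase j, x := (Finset.add_sum_erase _ _ hjA).symm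
  omega

lemma exists_shifted (n k t : ℕ) (F : Finset (Finset ℕ)) (h1 : Sized' n k F) (h2 : Inter t F) :
    ∃ G, Sized' n k G ∧ Inter t G ∧ G.card = F.card ∧
      (∂^[t] G).card ≤ (∂^[t] F).card ∧
      ∀ i j, i < j → j < n → UV.IsCompressed {i} {j} G := by
  classical
  set bad : Finset (ℕ × ℕ) :=
    ((range n) ×ˢ (range n)).filter
      (fun p => p.1 < p.2 ∧ ¬ UV.IsCompressed {p.1} {p.2} F) with hbad
  obtain hb | hb := bad.eq_empty_or_nonempty
  · refine ⟨F, h1, h2, rfl, le_rfl, fun i j hij hjn => ?_⟩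
    by_contra hc
    exact (eq_empty_iff_forall_notMem.1 hb) ⟨i, j⟩
      (mem_filter.2 ⟨mem_product.2 ⟨mem_range.2 (hij.trans hjn), mem_range.2 hjn⟩, hij, hc⟩)
  · obtain ⟨⟨i, j⟩, hmem⟩ := hb
    rw [hbad, mem_filter] at hmem
    obtain ⟨hpr, hij, hnc⟩ := hmem
    have hjn : j < n := mem_range.1 (mem_product.1 hpr).2
    have hne : UV.compression {i} {j} F ≠ F := hnc
    have hlt : sumw (UV.compression {i} {j} F) < sumw F := sumw_compression_lt hij hne
    obtain ⟨G, g1, g2, g3, g4, g5⟩ :=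
      exists_shifted n k t (UV.compression {i} {j} F) (sized_shift hij hjn h1)
        (inter_shift hij.ne h2)
    exact ⟨G, g1, g2, g3.trans (UV.card_compression _ _ _),
      g4.trans (card_shadow_iterate_single_le t F), g5⟩
termination_by sumw F


/-- Katona's intersecting shadow theorem. -/
theorem katona : ∀ n k t : ℕ, ∀ F : Finset (Finset ℕ),
    t ≤ k → Sized' n k F → Inter t F → F.card ≤ (∂^[t] F).card := by
  intro n
  induction n using Nat.strong_induction_on with
  | _ n IH =>
    intro k t F htk hS hI
    rcases F.eq_empty_or_nonempty with rfl | hne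
    · simp
    rcases Nat.eq_zero_or_pos t with rfl | ht0
    · simp
    rcases eq_or_lt_of_le htk with rfl | htk'
    · -- t = k : F is a single set, shadow contains ∅
      obtain ⟨X0, hX0⟩ := hne
      have h1 : (∅ : Finset ℕ) ∈ ∂^[t] F := by
        rw [mem_shadow_iterate_iff_exists_sdiff]
        exact ⟨X0, hX0, empty_subset _, by rw [sdiff_empty, (hS X0 hX0).2]⟩
      have h2 : F.card ≤ 1 := by
        rw [card_le_one]
        intro a ha b hb
        have hab := hI a ha b hb
        have h3 : a ∩ b = a := eq_of_subset_of_card_le (inter_subset_left)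
          (by rw [(hS a ha).2]; exact hab)
        have h4 : a ∩ b = b := eq_of_subset_of_card_le (inter_subset_right)
          (by rw [(hS b hb).2]; exact hab)
        rw [← h3, h4]
      exact h2.trans (card_pos.2 ⟨∅, h1⟩)
    -- now 0 < t < k
    by_cases hbase : n + t ≤ 2 * k
    · -- base case : counting argument
      have hkn : k ≤ n := by
        obtain ⟨X0, hX0⟩ := hne
        have := (hS X0 hX0).2 ▸ card_le_card (hS X0 hX0).1
        simpa using this
      have hsh : ∀ W ∈ ∂^[t] F, W.card = k - t ∧ W ⊆ range n := by
        intro W hW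
        rw [mem_shadow_iterate_iff_exists_sdiff] at hW
        obtain ⟨X, hXF, hWX, hcard⟩ := hW
        have h1 : W.card + t = k := by
          have h2 := card_sdiff_add_card_eq_card hWX
          have h3 := (hS X hXF).2
          omega
        exact ⟨by omega, hWX.trans (hS X hXF).1⟩
      have key := Finset.card_mul_le_card_mul (fun X W => W ⊆ X)
        (s := F) (t := ∂^[t] F) (m := Nat.choose k t) (n := Nat.choose k t) ?_ ?_
      · have hpos : 0 < Nat.choose k t := Nat.choose_pos htk
        exact Nat.le_of_mul_le_mul_right key hpos
      · -- every X ∈ F has at least C(k, t) = C(k, k-t) subsets in the shadow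
        intro X hX
        have h1 : X.powersetCard (k - t) ⊆ (∂^[t] F).bipartiteAbove (fun X W => W ⊆ X) X := by
          intro W hW
          rw [mem_powersetCard] at hW
          rw [Finset.mem_bipartiteAbove]
          refine ⟨?_, hW.1⟩
          rw [mem_shadow_iterate_iff_exists_sdiff]
          refine ⟨X, hX, hW.1, ?_⟩
          rw [card_sdiff_of_subset hW.1, (hS X hX).2, hW.2]
          omega
        have h2 := card_le_card h1
        rwa [card_powersetCard, (hS X hX).2, Nat.choose_symm htk] at h2
      · -- every W in the shadow is below at most C(n-(k-t), t) ≤ C(k,t) members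
        intro W hW
        obtain ⟨hWc, hWr⟩ := hsh W hW
        have h1 : (F.bipartiteBelow (fun X W => W ⊆ X) W).card ≤
            ((range n \ W).powersetCard t).card := by
          apply card_le_card_of_injOn (fun X => X \ W)
          · intro X hX
            rw [mem_coe, Finset.mem_bipartiteBelow] at hX
            rw [mem_coe, mem_powersetCard]
            constructor
            · exact sdiff_subset_sdiff (hS X hX.1).1 Subset.rfl
            · rw [card_sdiff_of_subset hX.2, (hS X hX.1).2, hWc]; omega
          · intro X hX X' hX' hee
            dsimp only at hee
            simp only [mem_coe, Finset.mem_bipartiteBelow] at hX hX'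
            rw [← union_sdiff_of_subset hX.2, ← union_sdiff_of_subset hX'.2, hee]
        rw [card_powersetCard, card_sdiff_of_subset hWr, card_range, hWc] at h1
        refine h1.trans (Nat.choose_le_choose t ?_)
        omega
    · -- induction step
      push_neg at hbase
      obtain ⟨G, g1, g2, g3, g4, g5⟩ := exists_shifted n k t F hS hI
      rw [← g3]
      refine le_trans ?_ g4
      -- split G along the element n-1
      have hn1 : 1 ≤ n := by
        obtain ⟨X0, hX0⟩ := hne
        have h1 := (hS X0 hX0).2 ▸ card_le_card (hS X0 hX0).1
        rw [card_range] at h1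
        omega
      set p : ℕ := n - 1 with hp
      set G0 : Finset (Finset ℕ) := G.filter (fun X => p ∉ X) with hG0
      set G1 : Finset (Finset ℕ) := (G.filter (fun X => p ∈ X)).image (fun X => X.erase p)
        with hG1
      have hcard1 : G1.card = (G.filter (fun X => p ∈ X)).card := by
        apply card_image_of_injOn
        intro X hX X' hX' he
        dsimp only at he
        rw [mem_coe, mem_filter] at hX hX'
        rw [← insert_erase hX.2, he, insert_erase hX'.2]
      have hGsplit : G.card = G0.card + G1.card := by
        rw [hcard1, hG0]
        rw [← card_filter_add_card_filter_not (p := fun X => p ∈ X)]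
        omega
      -- G0 is t-intersecting, sized k, in range (n-1)
      have hS0 : Sized' (n-1) k G0 := by
        intro X hX
        rw [hG0, mem_filter] at hX
        refine ⟨?_, (g1 X hX.1).2⟩
        intro x hx
        have h1 := mem_range.1 ((g1 X hX.1).1 hx)
        rw [mem_range]
        rcases Nat.lt_or_ge x (n-1) with h | h
        · exact h
        · exfalso; have : x = p := by omega
          exact hX.2 (this ▸ hx)
      have hI0 : Inter t G0 := fun X hX Y hY =>
        g2 X (mem_filter.1 hX).1 Y (mem_filter.1 hY).1
      have hS1 : Sized' (n-1) (k-1) G1 := by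
        intro X hX
        rw [hG1, mem_image] at hX
        obtain ⟨Y, hY, rfl⟩ := hX
        rw [mem_filter] at hY
        constructor
        · intro x hx
          rw [mem_erase] at hx
          have h1 := mem_range.1 ((g1 Y hY.1).1 hx.2)
          rw [mem_range]
          omega
        · rw [card_erase_of_mem hY.2, (g1 Y hY.1).2]
      have hI1 : Inter t G1 := by
        rintro X' hX' Y' hY'
        rw [hG1, mem_image] at hX' hY'
        obtain ⟨X, hX, rfl⟩ := hX'
        obtain ⟨Y, hY, rfl⟩ := hY'
        rw [mem_filter] at hX hY
        by_contra hlt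
        push_neg at hlt
        -- X ∩ Y = insert p (X.erase p ∩ Y.erase p)
        have hXY : X ∩ Y = insert p (X.erase p ∩ Y.erase p) := by
          ext x
          simp only [mem_inter, mem_insert, mem_erase]
          constructor
          · rintro ⟨h1, h2⟩
            by_cases hxp : x = p
            · exact Or.inl hxp
            · exact Or.inr ⟨⟨hxp, h1⟩, hxp, h2⟩
          · rintro (rfl | ⟨⟨h1, h2⟩, h3, h4⟩)
            · exact ⟨hX.2, hY.2⟩
            · exact ⟨h2, h4⟩
        have hiXY := g2 X hX.1 Y hY.1
        rw [hXY, card_insert_of_notMem (fun hc => (mem_erase.1 (mem_inter.1 hc).1).1 rfl)]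
          at hiXY
        have heq : (X.erase p ∩ Y.erase p).card = t - 1 := by omega
        -- find i outside X ∪ Y, i < n-1
        have hXc : X.card = k := (g1 X hX.1).2
        have hYc : Y.card = k := (g1 Y hY.1).2
        have hcu : (X ∪ Y).card + (X ∩ Y).card = X.card + Y.card :=
          card_union_add_card_inter _ _
        have hXYr : X ∪ Y ⊆ range n := union_subset (g1 X hX.1).1 (g1 Y hY.1).1
        have hex : ∃ i, i ∈ range n ∧ i ∉ X ∪ Y := by
          have h1 : ((range n).filter (fun x => x ∉ X ∪ Y)).Nonempty := by
            rw [← card_pos]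
            have h2 : (range n).card ≤ ((range n).filter (fun x => x ∉ X ∪ Y)).card
                + (X ∪ Y).card := by
              rw [← card_union_of_disjoint]
              · apply card_le_card
                intro x hx
                by_cases h3 : x ∈ X ∪ Y
                · exact mem_union_right _ h3
                · exact mem_union_left _ (mem_filter.2 ⟨hx, h3⟩)
              · rw [disjoint_left]
                intro a ha hc
                exact (mem_filter.1 ha).2 hc
            rw [card_range] at h2
            have h4 : (X ∩ Y).card = t := by
              rw [hXY, card_insert_of_notMem
                (fun hc => (mem_erase.1 (mem_inter.1 hc).1).1 rfl), heq]
              omega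
            omega
          obtain ⟨i, hi⟩ := h1
          rw [mem_filter] at hi
          exact ⟨i, hi.1, hi.2⟩
        obtain ⟨i, hir, hiXY2⟩ := hex
        have hip : i ≠ p := fun hc => hiXY2 (by rw [hc]; exact mem_union_left _ hX.2)
        have hiltp : i < p := by
          have := mem_range.1 hir; omega
        have hiX : i ∉ X := fun hc => hiXY2 (mem_union_left _ hc)
        have hiY : i ∉ Y := fun hc => hiXY2 (mem_union_right _ hc)
        -- shiftedness : insert i (X.erase p) ∈ G
        have hcomp := g5 i p hiltp (by omega)
        have hmem : UV.compress {i} {p} X ∈ UV.compression {i} {p} G :=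
          UV.compress_mem_compression hX.1
        rw [hcomp] at hmem
        rw [compress_single (by omega) hiX hX.2] at hmem
        have hfin := g2 _ hmem Y hY.1
        -- (insert i (X.erase p)) ∩ Y = X.erase p ∩ Y.erase p
        have : insert i (X.erase p) ∩ Y = X.erase p ∩ Y.erase p := by
          ext x
          simp only [mem_inter, mem_insert, mem_erase]
          constructor
          · rintro ⟨rfl | ⟨h1, h2⟩, h3⟩
            · exact absurd h3 hiY
            · exact ⟨⟨h1, h2⟩, fun hc => h1 (by omega), h3⟩
          · rintro ⟨⟨h1, h2⟩, h3, h4⟩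
            exact ⟨Or.inr ⟨h1, h2⟩, h4⟩
        rw [this, heq] at hfin
        omega
      -- apply IH
      have ht1 : t ≤ k - 1 := by omega
      have ihG0 := IH (n-1) (by omega) k t G0 htk hS0 hI0
      have ihG1 := IH (n-1) (by omega) (k-1) t G1 ht1 hS1 hI1
      -- combine shadows
      have hsub : (∂^[t] G0) ∪ (∂^[t] G1).image (insert p) ⊆ ∂^[t] G := by
        intro W hW
        rw [mem_union] at hW
        rcases hW with hW | hW
        · rw [mem_shadow_iterate_iff_exists_sdiff] at hW ⊢
          obtain ⟨X, hX, h1, h2⟩ := hW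
          exact ⟨X, (mem_filter.1 hX).1, h1, h2⟩
        · rw [mem_image] at hW
          obtain ⟨W', hW', rfl⟩ := hW
          rw [mem_shadow_iterate_iff_exists_sdiff] at hW' ⊢
          obtain ⟨X', hX', h1, h2⟩ := hW'
          rw [hG1, mem_image] at hX'
          obtain ⟨X, hX, rfl⟩ := hX'
          rw [mem_filter] at hX
          refine ⟨X, hX.1, ?_, ?_⟩
          · rw [← insert_erase hX.2]
            exact insert_subset_insert _ h1
          · rw [← h2]
            congr 1
            ext x
            simp only [mem_sdiff, mem_insert, mem_erase, not_or]
            tauto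
      have hdisj : Disjoint (∂^[t] G0) ((∂^[t] G1).image (insert p)) := by
        rw [disjoint_left]
        intro W hW hc
        rw [mem_shadow_iterate_iff_exists_sdiff] at hW
        obtain ⟨X, hX, h1, -⟩ := hW
        rw [mem_image] at hc
        obtain ⟨W', -, rfl⟩ := hc
        exact (mem_filter.1 hX).2 (h1 (mem_insert_self _ _))
      have hinj : ((∂^[t] G1).image (insert p)).card = (∂^[t] G1).card := by
        apply card_image_of_injOn
        intro W hW W' hW' he
        have hpW : ∀ V ∈ ∂^[t] G1, p ∉ V := by
          intro V hV
          rw [mem_shadow_iterate_iff_exists_sdiff] at hV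
          obtain ⟨X', hX', h1, -⟩ := hV
          intro hc
          have h2 := (hS1 X' hX').1 (h1 hc)
          rw [mem_range] at h2
          omega
        rw [mem_coe] at hW hW'
        rw [← erase_insert (hpW W hW), he, erase_insert (hpW W' hW')]
      calc G.card = G0.card + G1.card := hGsplit
        _ ≤ (∂^[t] G0).card + (∂^[t] G1).card := Nat.add_le_add ihG0 ihG1
        _ = ((∂^[t] G0) ∪ (∂^[t] G1).image (insert p)).card := by
            rw [card_union_of_disjoint hdisj, hinj]
        _ ≤ (∂^[t] G).card := card_le_card hsub


lemma compress_down (hiA : i ∈ A) : UV.compress ∅ {i} A = A.erase i := by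
  rw [UV.compress_of_disjoint_of_le (disjoint_empty_left _) (by simpa using hiA)]
  simp [erase_eq]

lemma compress_down' (hiA : i ∉ A) : UV.compress ∅ {i} A = A := by
  rw [UV.compress, if_neg]
  rintro ⟨-, h⟩
  exact hiA (by simpa using h)

lemma mem_dcomp_cases (hA : A ∈ UV.compression ∅ {i} F) :
    A ∈ F ∨ (i ∉ A ∧ insert i A ∈ F) := by
  by_cases hAF : A ∈ F
  · exact Or.inl hAF
  · have h2 : i ∉ A := by
      simpa using UV.disjoint_of_mem_compression_of_notMem hA hAF
    have h3 := UV.sup_sdiff_mem_of_mem_compression_of_notMem hA hAF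
    refine Or.inr ⟨h2, ?_⟩
    convert h3 using 1
    ext x
    simp only [mem_insert, mem_sdiff, sup_eq_union, mem_union, mem_singleton, notMem_empty,
      not_false_iff, and_true]
    tauto

-- symmDiff membership helper
lemma mem_symmDiff_fin {x : ℕ} : x ∈ A ∆ B ↔ (x ∈ A ∧ x ∉ B) ∨ (x ∈ B ∧ x ∉ A) := by
  rw [symmDiff_def]
  simp only [sup_eq_union, mem_union, mem_sdiff]

lemma diam_dcomp (h : Diam d F) : Diam d (UV.compression ∅ {i} F) := by
  have aux : ∀ A B, (i ∉ A ∧ insert i A ∈ F) → B ∈ UV.compression ∅ {i} F → B ∈ F →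
      (A ∆ B).card ≤ d := by
    rintro A B ⟨hiA, hAF⟩ hBc hBF
    by_cases hiB : i ∈ B
    · -- B kept : B.erase i ∈ F ; A ∆ B = insert i A ∆ B.erase i
      have hBk : B.erase i ∈ F := by
        rcases UV.mem_compression.1 hBc with h' | h'
        · have := h'.2; rwa [compress_down hiB] at this
        · exact absurd hBF h'.1
      have he : A ∆ B = insert i A ∆ B.erase i := by
        ext x
        by_cases hxi : x = i
        · subst hxi
          simp [mem_symmDiff_fin, hiA, hiB]
        · simp [mem_symmDiff_fin, hxi]
      rw [he]
      exact h _ hAF _ hBk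
    · -- i ∉ B : A ∆ B = (insert i A ∆ B).erase i
      have he : A ∆ B = (insert i A ∆ B).erase i := by
        ext x
        by_cases hxi : x = i
        · subst hxi
          simp [mem_symmDiff_fin, hiA, hiB]
        · simp [mem_symmDiff_fin, hxi]
      rw [he]
      exact le_trans (card_le_card (erase_subset _ _)) (h _ hAF _ hBF)
  intro A hA B hB
  rcases mem_dcomp_cases hA with hAF | hAm
  · rcases mem_dcomp_cases hB with hBF | hBm
    · exact h A hAF B hBF
    · rw [symmDiff_comm]; exact aux B A hBm hA hAF
  · rcases mem_dcomp_cases hB with hBF | hBm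
    · exact aux A B hAm hB hBF
    · obtain ⟨hiA, hAF⟩ := hAm
      obtain ⟨hiB, hBF⟩ := hBm
      have he : A ∆ B = insert i A ∆ insert i B := by
        ext x
        by_cases hxi : x = i
        · subst hxi; simp [mem_symmDiff_fin, hiA, hiB]
        · simp [mem_symmDiff_fin, hxi]
      rw [he]
      exact h _ hAF _ hBF

def sumc (F : Finset (Finset ℕ)) : ℕ := ∑ X ∈ F, X.card

lemma sumc_dcomp_lt (hne : UV.compression ∅ {i} F ≠ F) :
    sumc (UV.compression ∅ {i} F) < sumc F := by
  classical
  have q : ∀ Q ∈ F.filter (fun A => UV.compress ∅ {i} A ∉ F), UV.compress ∅ {i} Q ≠ Q := by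
    intro Q hQ hc
    rw [mem_filter] at hQ
    exact hQ.2 (by rw [hc]; exact hQ.1)
  have uA : F.filter (fun A => UV.compress ∅ {i} A ∈ F) ∪
      F.filter (fun A => UV.compress ∅ {i} A ∉ F) = F := filter_union_filter_not_eq _ _
  have ne₂ : (F.filter (fun A => UV.compress ∅ {i} A ∉ F)).Nonempty := by
    refine nonempty_iff_ne_empty.2 fun z => hne ?_
    rw [UV.compression, filter_image, z, image_empty, union_empty]
    rwa [z, union_empty] at uA
  rw [sumc, sumc, UV.compression, sum_union UV.compress_disjoint]
  conv_rhs => rw [← uA]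
  rw [sum_union (disjoint_filter_filter_not _ _ _), add_lt_add_iff_left, filter_image,
    sum_image UV.compress_injOn]
  refine sum_lt_sum_of_nonempty ne₂ fun A hA => ?_
  have hiA : i ∈ A := by
    by_contra hc
    exact q A hA (compress_down' hc)
  rw [compress_down hiA, card_erase_of_mem hiA]
  have : 0 < A.card := card_pos.2 ⟨i, hiA⟩
  omega

lemma exists_downclosed (n d : ℕ) (F : Finset (Finset ℕ)) (h1 : ∀ X ∈ F, X ⊆ range n)
    (h2 : Diam d F) :
    ∃ G, (∀ X ∈ G, X ⊆ range n) ∧ Diam d G ∧ G.card = F.card ∧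
      ∀ X ∈ G, ∀ i ∈ X, X.erase i ∈ G := by
  classical
  set bad : Finset ℕ := (range n).filter (fun i => ¬ UV.IsCompressed ∅ {i} F) with hbad
  obtain hb | hb := bad.eq_empty_or_nonempty
  · refine ⟨F, h1, h2, rfl, fun X hX i hi => ?_⟩
    have hin : i ∈ range n := h1 X hX hi
    have hcomp : UV.IsCompressed ∅ {i} F := by
      by_contra hc
      exact (eq_empty_iff_forall_notMem.1 hb) i (mem_filter.2 ⟨hin, hc⟩)
    have := UV.compress_mem_compression (u := ∅) (v := {i}) hX
    rwa [hcomp, compress_down hi] at this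
  · obtain ⟨i, hmem⟩ := hb
    rw [hbad, mem_filter] at hmem
    have hne : UV.compression ∅ {i} F ≠ F := hmem.2
    have hlt := sumc_dcomp_lt hne
    have h1' : ∀ X ∈ UV.compression ∅ {i} F, X ⊆ range n := by
      intro X hX
      rcases mem_dcomp_cases hX with h | ⟨h3, h4⟩
      · exact h1 X h
      · exact (subset_insert _ _).trans (h1 _ h4)
    obtain ⟨G, g1, g2, g3, g4⟩ := exists_downclosed n d (UV.compression ∅ {i} F) h1'
      (diam_dcomp h2)
    exact ⟨G, g1, g2, g3.trans (UV.card_compression _ _ _), g4⟩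
termination_by sumc F

lemma downclosed_mem (hG : ∀ X ∈ G, ∀ i ∈ X, X.erase i ∈ G) :
    ∀ m X Y, (X \ Y).card ≤ m → X ∈ G → Y ⊆ X → Y ∈ G := by
  intro m
  induction m with
  | zero =>
    intro X Y h hX hYX
    have : X = Y := by
      have h1 : X \ Y = ∅ := card_eq_zero.1 (le_antisymm h (Nat.zero_le _))
      exact Subset.antisymm (fun x hx => by
        by_contra hc
        exact notMem_empty x (h1 ▸ mem_sdiff.2 ⟨hx, hc⟩)) hYX
    exact this ▸ hX
  | succ m ih =>
    intro X Y h hX hYX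
    rcases (X \ Y).eq_empty_or_nonempty with he | ⟨a, ha⟩
    · have : X = Y := Subset.antisymm (fun x hx => by
        by_contra hc
        exact notMem_empty x (he ▸ mem_sdiff.2 ⟨hx, hc⟩)) hYX
      exact this ▸ hX
    · rw [mem_sdiff] at ha
      refine ih (X.erase a) Y ?_ (hG X hX a ha.1) (fun x hx => mem_erase.2 ⟨fun hc => ha.2 (hc ▸ hx), hYX hx⟩)
      have h1 : X.erase a \ Y = (X \ Y).erase a := by
        ext x
        simp only [mem_sdiff, mem_erase]
        tauto
      rw [h1, card_erase_of_mem (mem_sdiff.2 ha)]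
      omega


lemma ideal_bound (n s : ℕ) (hn : 2*s+2 ≤ n) (G : Finset (Finset ℕ))
    (hr : ∀ X ∈ G, X ⊆ range n)
    (hdc : ∀ X ∈ G, ∀ i ∈ X, X.erase i ∈ G)
    (hdiam : Diam (2*s) G) :
    G.card ≤ ∑ i ∈ range (s+1), n.choose i := by
  classical
  rcases G.eq_empty_or_nonempty with rfl | ⟨X0, hX0⟩
  · simp
  have hdown : ∀ X ∈ G, ∀ Y, Y ⊆ X → Y ∈ G := by
    intro X hX Y hYX
    exact downclosed_mem hdc (X \ Y).card X Y le_rfl hX hYX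
  have hemp : (∅ : Finset ℕ) ∈ G := hdown X0 hX0 ∅ (empty_subset _)
  have hsize : ∀ X ∈ G, X.card ≤ 2*s := by
    intro X hX
    have := hdiam X hX ∅ hemp
    rwa [show (∅ : Finset ℕ) = ⊥ from rfl, symmDiff_bot] at this
  set f : ℕ → ℕ := fun k => (G.filter (fun X => X.card = k)).card with hf
  have hsum : G.card = ∑ k ∈ range (2*s+1), f k := by
    apply card_eq_sum_card_fiberwise
    intro X hX
    exact mem_range.2 (by have := hsize X hX; omega)
  -- the pairing inequality
  have pair : ∀ i, 1 ≤ i → i ≤ s → f (2*s+1-i) + f i ≤ n.choose i := by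
    intro i hi1 his
    set K : ℕ := 2*s+1-i with hK
    set t : ℕ := n - (2*s+1) with ht
    set Fi : Finset (Finset ℕ) := G.filter (fun X => X.card = K) with hFi
    set H : Finset (Finset ℕ) := Fi.image (fun X => range n \ X) with hH
    have hcardH : H.card = Fi.card := by
      apply card_image_of_injOn
      intro X hX X' hX' he
      dsimp only at he
      rw [mem_coe, hFi, mem_filter] at hX hX'
      have h1 : range n \ (range n \ X) = X := Finset.sdiff_sdiff_eq_self (hr X hX.1)
      rw [← h1, he, Finset.sdiff_sdiff_eq_self (hr X' hX'.1)]
    have hSH : Sized' n (n - K) H := by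
      intro U hU
      rw [hH, mem_image] at hU
      obtain ⟨X, hX, rfl⟩ := hU
      rw [hFi, mem_filter] at hX
      exact ⟨sdiff_subset, by rw [card_sdiff_of_subset (hr X hX.1), card_range, hX.2]⟩
    -- cross intersection bound via the diameter and down-closedness
    have hcross : ∀ X ∈ Fi, ∀ Y ∈ Fi, (Y \ X).card ≤ i := by
      intro X hX Y hY
      rw [hFi, mem_filter] at hX hY
      by_contra hc
      push_neg at hc
      obtain ⟨Z, hZsub, hZcard⟩ := Finset.exists_subset_card_eq (s := Y \ X) (n := i+1) hc
      have hZG : Z ∈ G := hdown Y hY.1 Z (hZsub.trans sdiff_subset)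
      have hdisj : Disjoint X Z :=
        Finset.disjoint_left.2 fun a haX haZ => (mem_sdiff.1 (hZsub haZ)).2 haX
      have h1 := hdiam X hX.1 Z hZG
      rw [hdisj.symmDiff_eq_sup] at h1
      rw [sup_eq_union, card_union_of_disjoint hdisj, hX.2, hZcard] at h1
      omega
    have hIH : Inter t H := by
      intro U hU V hV
      rw [hH, mem_image] at hU hV
      obtain ⟨X, hX, rfl⟩ := hU
      obtain ⟨Y, hY, rfl⟩ := hV
      have hiden : range n \ X ∩ (range n \ Y) = range n \ (X ∪ Y) := by
        ext x; simp only [mem_inter, mem_sdiff, mem_union]; tauto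
      rw [hiden]
      have h2 : (X ∪ Y).card ≤ 2*s+1 := by
        have h3 : (X ∪ Y).card = X.card + (Y \ X).card := by
          rw [← card_union_of_disjoint disjoint_sdiff, union_sdiff_self_eq_union]
        have h4 := hcross X hX Y hY
        have h5 : X.card = K := (mem_filter.1 hX).2
        omega
      have h6 : X ∪ Y ⊆ range n :=
        union_subset (hr X (mem_filter.1 hX).1) (hr Y (mem_filter.1 hY).1)
      rw [card_sdiff_of_subset h6, card_range]
      omega
    have hKt : t ≤ n - K := by omega
    have hkat := katona n (n - K) t H hKt hSH hIH
    -- shadow sets are i-sets outside G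
    have hshad : ∂^[t] H ⊆ ((range n).powersetCard i).filter (fun W => W ∉ G) := by
      intro W hW
      rw [mem_shadow_iterate_iff_exists_sdiff] at hW
      obtain ⟨U, hU, hWU, hcard⟩ := hW
      obtain ⟨hUr, hUc⟩ := hSH U hU
      have hWc : W.card = i := by
        have := card_sdiff_add_card_eq_card hWU
        omega
      rw [mem_filter, mem_powersetCard]
      refine ⟨⟨hWU.trans hUr, hWc⟩, ?_⟩
      -- W ⊆ U = range n \ X for some X ∈ Fi
      rw [hH, mem_image] at hU
      obtain ⟨X, hX, rfl⟩ := hU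
      rw [hFi, mem_filter] at hX
      intro hWG
      have hdisj : Disjoint X W :=
        Finset.disjoint_left.2 fun a haX haW => (mem_sdiff.1 (hWU haW)).2 haX
      have h1 := hdiam X hX.1 W hWG
      rw [hdisj.symmDiff_eq_sup, sup_eq_union, card_union_of_disjoint hdisj, hX.2, hWc] at h1
      omega
    have hGi : G.filter (fun X => X.card = i) ⊆ (range n).powersetCard i := by
      intro X hX
      rw [mem_filter] at hX
      rw [mem_powersetCard]
      exact ⟨hr X hX.1, hX.2⟩
    have hdisj2 : Disjoint (∂^[t] H) (G.filter (fun X => X.card = i)) := by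
      rw [disjoint_left]
      intro W hW hc
      exact (mem_filter.1 (hshad hW)).2 (mem_filter.1 hc).1
    have hfin : (∂^[t] H).card + f i ≤ n.choose i := by
      have h1 : (∂^[t] H) ∪ G.filter (fun X => X.card = i) ⊆ (range n).powersetCard i :=
        union_subset (hshad.trans (filter_subset _ _)) hGi
      have h2 := card_le_card h1
      rw [card_union_of_disjoint hdisj2, card_powersetCard, card_range] at h2
      exact h2
    have hfK : f K = H.card := by rw [hcardH]
    omega
  -- assemble
  have h1 : ∑ k ∈ Ico (s+1) (2*s+1), f k = ∑ i ∈ Ico 1 (s+1), f (2*s+1-i) := by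
    apply Finset.sum_nbij' (fun k => 2*s+1-k) (fun i => 2*s+1-i)
    · intro a ha; rw [mem_Ico] at ha ⊢; omega
    · intro a ha; rw [mem_Ico] at ha ⊢; omega
    · intro a ha; rw [mem_Ico] at ha; omega
    · intro a ha; rw [mem_Ico] at ha; omega
    · intro a ha; rw [mem_Ico] at ha; congr 1; omega
  have hsplit : ∑ k ∈ range (2*s+1), f k
      = f 0 + (∑ i ∈ Ico 1 (s+1), f i + ∑ i ∈ Ico 1 (s+1), f (2*s+1-i)) := by
    have e1 : ∑ k ∈ range (2*s+1), f k
        = ∑ k ∈ Ico 0 (s+1), f k + ∑ k ∈ Ico (s+1) (2*s+1), f k := by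
      rw [range_eq_Ico]
      exact (Finset.sum_Ico_consecutive f (Nat.zero_le _) (by omega)).symm
    have e2 : ∑ k ∈ Ico 0 (s+1), f k = f 0 + ∑ k ∈ Ico 1 (s+1), f k := by
      rw [Finset.sum_eq_sum_Ico_succ_bot (by omega : (0:ℕ) < s+1) f]
    rw [e1, e2, h1]
    omega
  have hf0 : f 0 ≤ 1 := by
    rw [hf]
    refine (card_le_card ?_).trans (card_singleton (∅ : Finset ℕ)).le
    intro X hX
    rw [mem_filter] at hX
    rw [mem_singleton, ← card_eq_zero.1 hX.2]
  have hpairs : ∑ i ∈ Ico 1 (s+1), f i + ∑ i ∈ Ico 1 (s+1), f (2*s+1-i)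
      ≤ ∑ i ∈ Ico 1 (s+1), n.choose i := by
    rw [← Finset.sum_add_distrib]
    apply Finset.sum_le_sum
    intro i hi
    rw [mem_Ico] at hi
    have := pair i hi.1 (by omega)
    omega
  have hchoose : ∑ i ∈ range (s+1), n.choose i
      = 1 + ∑ i ∈ Ico 1 (s+1), n.choose i := by
    rw [range_eq_Ico, Finset.sum_eq_sum_Ico_succ_bot (by omega : 0 < s+1), Nat.choose_zero_right]
  omega


def toSet (n : ℕ) (x : Fin n → ZMod 2) : Finset ℕ :=
  (univ.filter (fun i => x i = 1)).image Fin.val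

lemma mem_toSet {x : Fin n → ZMod 2} {i : Fin n} : (i : ℕ) ∈ toSet n x ↔ x i = 1 := by
  rw [toSet, mem_image]
  constructor
  · rintro ⟨j, hj, hji⟩
    rw [mem_filter] at hj
    exact Fin.val_injective hji ▸ hj.2
  · intro h
    exact ⟨i, mem_filter.2 ⟨mem_univ _, h⟩, rfl⟩

lemma toSet_subset (x : Fin n → ZMod 2) : toSet n x ⊆ range n := by
  intro m hm
  rw [toSet, mem_image] at hm
  obtain ⟨j, -, rfl⟩ := hm
  exact mem_range.2 j.isLt

lemma toSet_inj : Function.Injective (toSet n) := by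
  intro x y hxy
  funext i
  have h2 : ∀ a : ZMod 2, a = 0 ∨ a = 1 := by decide
  have hx := mem_toSet (x := x) (i := i)
  have hy := mem_toSet (x := y) (i := i)
  rw [hxy] at hx
  rcases h2 (x i) with h | h <;> rcases h2 (y i) with h' | h'
  · rw [h, h']
  · exact absurd (hx.1 (hy.2 h')) (by rw [h]; decide)
  · exact absurd (hy.1 (hx.2 h)) (by rw [h']; decide)
  · rw [h, h']

lemma hamming_eq_symmDiff (x y : Fin n → ZMod 2) :
    hammingDist x y = ((toSet n x) ∆ (toSet n y)).card := by
  have he : (toSet n x) ∆ (toSet n y) = (univ.filter (fun i => x i ≠ y i)).image Fin.val := by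
    ext m
    rw [symmDiff_def]
    simp only [sup_eq_union, mem_union, mem_sdiff, mem_image, mem_filter]
    constructor
    · rintro (⟨h1, h2⟩ | ⟨h1, h2⟩)
      · rw [toSet, mem_image] at h1
        obtain ⟨j, hj, rfl⟩ := h1
        rw [mem_filter] at hj
        refine ⟨j, ⟨mem_univ _, ?_⟩, rfl⟩
        intro hc
        exact h2 (mem_toSet.2 (hc ▸ hj.2))
      · rw [toSet, mem_image] at h1
        obtain ⟨j, hj, rfl⟩ := h1
        rw [mem_filter] at hj
        refine ⟨j, ⟨mem_univ _, ?_⟩, rfl⟩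
        intro hc
        exact h2 (mem_toSet.2 (hc.symm ▸ hj.2))
    · rintro ⟨j, ⟨-, hj⟩, rfl⟩
      have h2 : ∀ a : ZMod 2, a = 0 ∨ a = 1 := by decide
      rcases h2 (x j) with h | h <;> rcases h2 (y j) with h' | h'
      · exact absurd (h.trans h'.symm) hj
      · exact Or.inr ⟨mem_toSet.2 h', fun hc => by
          have := mem_toSet.1 hc; rw [h] at this; exact absurd this (by decide)⟩
      · exact Or.inl ⟨mem_toSet.2 h, fun hc => by
          have := mem_toSet.1 hc; rw [h'] at this; exact absurd this (by decide)⟩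
      · exact absurd (h.trans h'.symm) hj
  rw [he, card_image_of_injective _ Fin.val_injective]
  rfl


end Kleit


theorem stmt_15 (n s : ℕ) (hn : 2 * s < n - 1)
    (A : Finset (Fin n → ZMod 2))
    (hdiam : ∀ x ∈ A, ∀ y ∈ A, hammingDist x y ≤ 2 * s) :
    A.card ≤ ∑ i ∈ Finset.range (s + 1), n.choose i := by
  classical
  have hn' : 2*s+2 ≤ n := by omega
  set F : Finset (Finset ℕ) := A.image (Kleit.toSet n) with hF
  have hcard : F.card = A.card := Finset.card_image_of_injective _ Kleit.toSet_inj
  have h1 : ∀ X ∈ F, X ⊆ Finset.range n := by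
    intro X hX
    obtain ⟨x, -, rfl⟩ := Finset.mem_image.1 hX
    exact Kleit.toSet_subset x
  have h2 : Kleit.Diam (2*s) F := by
    intro X hX Y hY
    obtain ⟨x, hx, rfl⟩ := Finset.mem_image.1 hX
    obtain ⟨y, hy, rfl⟩ := Finset.mem_image.1 hY
    rw [← Kleit.hamming_eq_symmDiff]
    exact hdiam x hx y hy
  obtain ⟨G, g1, g2, g3, g4⟩ := Kleit.exists_downclosed n (2*s) F h1 h2
  have := Kleit.ideal_bound n s hn' G g1 g4 g2
  omega
end

section
/- Any subset A of Z₂ⁿ with diameter at most 2s+1 (where 2s+1 < n−1) satisfies |A| ≤ S_n(s) + C(n−1, s), where S_n(s) = ∑_{i=0}^{s} C(n,i). Moreover |B_s(x) ∪ B_s(y)| = S_n(s) + C(n−1,s) when d(x,y) = 1. (Kleitman's theorem, odd case.) -/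
open Finset symmDiff

namespace Kleitman16

def wt (A : Finset ℕ) : ℕ := ∑ a ∈ A, (a + 1)
def mu (F : Finset (Finset ℕ)) : ℕ := ∑ A ∈ F, wt A
def Diam (d : ℕ) (F : Finset (Finset ℕ)) : Prop := ∀ A ∈ F, ∀ B ∈ F, (A ∆ B).card ≤ d

def famC (c : Finset ℕ → Finset ℕ) (F : Finset (Finset ℕ)) : Finset (Finset ℕ) :=
  F.filter (fun A => c A ∈ F) ∪ (F.filter (fun A => c A ∉ F)).image c

lemma mem_famC {c : Finset ℕ → Finset ℕ} {F : Finset (Finset ℕ)} {X : Finset ℕ} :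
    X ∈ famC c F ↔ (X ∈ F ∧ c X ∈ F) ∨ (∃ B ∈ F, c B ∉ F ∧ c B = X) := by
  simp only [famC, mem_union, mem_filter, mem_image]
  constructor
  · rintro (h | ⟨B, ⟨hB1, hB2⟩, rfl⟩)
    · exact Or.inl h
    · exact Or.inr ⟨B, hB1, hB2, rfl⟩
  · rintro (h | ⟨B, hB1, hB2, rfl⟩)
    · exact Or.inl h
    · exact Or.inr ⟨B, ⟨hB1, hB2⟩, rfl⟩

section Generic
variable {c : Finset ℕ → Finset ℕ} {F : Finset (Finset ℕ)} {M d : ℕ}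

lemma famC_card (hinj : ∀ A B, c A ≠ A → c B ≠ B → c A = c B → A = B) :
    (famC c F).card = F.card := by
  rw [famC, card_union_of_disjoint, card_image_of_injOn]
  · rw [← card_union_of_disjoint (disjoint_filter_filter_not F F _), filter_union_filter_not_eq]
  · intro A hA B hB hAB
    simp only [coe_filter, Set.mem_setOf_eq] at hA hB
    by_cases h1 : c A = A
    · exact absurd hA.1 (h1 ▸ hA.2)
    · by_cases h2 : c B = B
      · exact absurd hB.1 (h2 ▸ hB.2)
      · exact hinj A B h1 h2 hAB
  · rw [disjoint_right]
    rintro X hX hX2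
    obtain ⟨B, hB, rfl⟩ := mem_image.1 hX
    exact (mem_filter.1 hB).2 (mem_filter.1 hX2).1

lemma famC_subsets (hc : ∀ A, A ⊆ range M → c A ⊆ range M) (hF : ∀ A ∈ F, A ⊆ range M) :
    ∀ X ∈ famC c F, X ⊆ range M := by
  intro X hX
  rcases mem_famC.1 hX with ⟨h1, _⟩ | ⟨B, hB, _, rfl⟩
  · exact hF X h1
  · exact hc B (hF B hB)

lemma famC_diam
    (hc1 : ∀ A B, (c A ∆ c B).card ≤ (A ∆ B).card)
    (hc2 : ∀ A B, c A ≠ A → c B ≠ B → c A ∆ B = A ∆ c B)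
    (hd : Diam d F) : Diam d (famC c F) := by
  have key : ∀ X ∈ famC c F, ∀ B ∈ F, c B ∉ F → (X ∆ c B).card ≤ d := by
    intro X hX B hB hcB
    rcases mem_famC.1 hX with ⟨h1, h2⟩ | ⟨A, hA, hcA, rfl⟩
    · -- X ∈ F and c X ∈ F
      have hcBB : c B ≠ B := fun h => hcB (by rw [h]; exact hB)
      by_cases hX' : c X = X
      · calc (X ∆ c B).card = (c X ∆ c B).card := by rw [hX']
          _ ≤ (X ∆ B).card := hc1 X B
          _ ≤ d := hd X h1 B hB
      · rw [symmDiff_comm, hc2 B X hcBB hX']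
        exact hd B hB (c X) h2
    · calc (c A ∆ c B).card ≤ (A ∆ B).card := hc1 A B
        _ ≤ d := hd A hA B hB
  intro X hX Y hY
  rcases mem_famC.1 hY with ⟨h1, _⟩ | ⟨B, hB, hcB, rfl⟩
  · rcases mem_famC.1 hX with ⟨g1, _⟩ | ⟨A, hA, hcA, rfl⟩
    · exact hd X g1 Y h1
    · rw [symmDiff_comm]
      exact key Y hY A hA hcA
  · exact key X hX B hB hcB

end Generic

def cd (j : ℕ) (A : Finset ℕ) : Finset ℕ := A.erase j
def cs (i j : ℕ) (A : Finset ℕ) : Finset ℕ :=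
  if j ∈ A ∧ i ∉ A then insert i (A.erase j) else A

lemma cd_ne_iff {j : ℕ} {A : Finset ℕ} : cd j A ≠ A ↔ j ∈ A := by
  simp [cd, Finset.erase_eq_self]

lemma cs_ne_iff {i j : ℕ} (hij : i ≠ j) {A : Finset ℕ} : cs i j A ≠ A ↔ (j ∈ A ∧ i ∉ A) := by
  unfold cs
  by_cases h : j ∈ A ∧ i ∉ A
  · rw [if_pos h]
    constructor
    · intro _; exact h
    · intro _ hEq
      exact h.2 (hEq ▸ mem_insert_self i _)
  · rw [if_neg h]; simp [h]

lemma cs_of_move {i j : ℕ} {A : Finset ℕ} (h : j ∈ A ∧ i ∉ A) :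
    cs i j A = insert i (A.erase j) := by simp [cs, h]

lemma cd_sd (j : ℕ) (A B : Finset ℕ) : cd j A ∆ cd j B = (A ∆ B).erase j := by
  ext x
  simp only [cd, mem_symmDiff, mem_erase]
  tauto

lemma cd_H1 (j : ℕ) (A B : Finset ℕ) : (cd j A ∆ cd j B).card ≤ (A ∆ B).card := by
  rw [cd_sd]; exact card_le_card (erase_subset _ _)

lemma cd_H2 (j : ℕ) (A B : Finset ℕ) (hA : cd j A ≠ A) (hB : cd j B ≠ B) :
    cd j A ∆ B = A ∆ cd j B := by
  rw [cd_ne_iff] at hA hB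
  ext x
  by_cases hx : x = j
  · subst hx; simp [cd, mem_symmDiff, hA, hB]
  · simp [cd, mem_symmDiff, mem_erase, hx]

lemma cd_H3 (j : ℕ) (A B : Finset ℕ) (hA : cd j A ≠ A) (hB : cd j B ≠ B)
    (h : cd j A = cd j B) : A = B := by
  rw [cd_ne_iff] at hA hB
  rw [← insert_erase hA, ← insert_erase hB]
  unfold cd at h
  rw [h]

-- the key one-sided estimate for cs when only A moves
lemma cs_H1_aux {i j : ℕ} (hij : i ≠ j) {A B : Finset ℕ} (hA : j ∈ A ∧ i ∉ A)
    (hB : ¬(j ∈ B ∧ i ∉ B)) :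
    (insert i (A.erase j) ∆ B).card ≤ (A ∆ B).card := by
  rcases Classical.em (i ∈ B) with hiB | hiB
  · rcases Classical.em (j ∈ B) with hjB | hjB
    · have hiD : i ∈ A ∆ B := by simp [mem_symmDiff, hA.2, hiB]
      have hjD : j ∉ A ∆ B := by simp [mem_symmDiff, hA.1, hjB]
      have hset : insert i (A.erase j) ∆ B = insert j ((A ∆ B).erase i) := by
        ext x
        by_cases hx1 : x = i
        · subst hx1; simp [mem_symmDiff, mem_erase, hA.2, hiB, hij]
        · by_cases hx2 : x = j
          · subst hx2; simp [mem_symmDiff, mem_erase, hA.1, hjB, Ne.symm hij]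
          · simp [mem_symmDiff, mem_erase, mem_insert, hx1, hx2]
      rw [hset, card_insert_of_notMem (fun hc => hjD (mem_of_mem_erase hc)),
        card_erase_of_mem hiD]
      have : 1 ≤ (A ∆ B).card := card_pos.2 ⟨i, hiD⟩
      omega
    · have hset : insert i (A.erase j) ∆ B ⊆ (A ∆ B) := by
        intro x hx
        simp only [mem_symmDiff, mem_insert, mem_erase] at hx ⊢
        rcases hx with ⟨h1 | ⟨h1, h2⟩, h3⟩ | ⟨h1, h2⟩
        · exact absurd hiB (h1 ▸ h3)
        · exact Or.inl ⟨h2, h3⟩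
        · push_neg at h2
          have hxj : x ≠ j := fun hh => hjB (hh ▸ h1)
          exact Or.inr ⟨h1, h2.2 hxj⟩
      exact card_le_card hset
  · rcases Classical.em (j ∈ B) with hjB | hjB
    · exact absurd ⟨hjB, hiB⟩ hB
    · have hiD : i ∉ A ∆ B := by simp [mem_symmDiff, hA.2, hiB]
      have hjD : j ∈ A ∆ B := by simp [mem_symmDiff, hA.1, hjB]
      have hset : insert i (A.erase j) ∆ B = insert i ((A ∆ B).erase j) := by
        ext x
        by_cases hx1 : x = i
        · subst hx1; simp [mem_symmDiff, mem_erase, hA.2, hiB, hij]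
        · by_cases hx2 : x = j
          · subst hx2; simp [mem_symmDiff, mem_erase, hA.1, hjB, Ne.symm hij]
          · simp [mem_symmDiff, mem_erase, mem_insert, hx1, hx2]
      rw [hset, card_insert_of_notMem (fun hc => hiD (mem_of_mem_erase hc)),
        card_erase_of_mem hjD]
      have : 1 ≤ (A ∆ B).card := card_pos.2 ⟨j, hjD⟩
      omega

lemma cs_H1 {i j : ℕ} (hij : i ≠ j) (A B : Finset ℕ) :
    (cs i j A ∆ cs i j B).card ≤ (A ∆ B).card := by
  by_cases hA : j ∈ A ∧ i ∉ A
  · by_cases hB : j ∈ B ∧ i ∉ B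
    · have hset : cs i j A ∆ cs i j B = A ∆ B := by
        rw [cs_of_move hA, cs_of_move hB]
        ext x
        by_cases hx1 : x = i
        · subst hx1; simp [mem_symmDiff, hA.2, hB.2, mem_erase]
        · by_cases hx2 : x = j
          · subst hx2; simp [mem_symmDiff, hA.1, hB.1, mem_erase, hij, Ne.symm hij]
          · simp [mem_symmDiff, mem_erase, mem_insert, hx1, hx2]
      rw [hset]
    · have hBfix : cs i j B = B := by
        by_contra h; exact hB ((cs_ne_iff hij).1 h)
      rw [hBfix, cs_of_move hA]
      exact cs_H1_aux hij hA hB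
  · have hAfix : cs i j A = A := by
      by_contra h; exact hA ((cs_ne_iff hij).1 h)
    rw [hAfix]
    by_cases hB : j ∈ B ∧ i ∉ B
    · rw [cs_of_move hB, symmDiff_comm, symmDiff_comm A B]
      exact cs_H1_aux hij hB hA
    · have hBfix : cs i j B = B := by
        by_contra h; exact hB ((cs_ne_iff hij).1 h)
      rw [hBfix]

lemma cs_H2 {i j : ℕ} (hij : i ≠ j) (A B : Finset ℕ) (hA : cs i j A ≠ A) (hB : cs i j B ≠ B) :
    cs i j A ∆ B = A ∆ cs i j B := by
  rw [cs_ne_iff hij] at hA hB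
  rw [cs_of_move hA, cs_of_move hB]
  ext x
  by_cases hx1 : x = i
  · subst hx1; simp [mem_symmDiff, mem_erase, hA.2, hB.2, hij]
  · by_cases hx2 : x = j
    · subst hx2; simp [mem_symmDiff, mem_erase, hA.1, hB.1, Ne.symm hij]
    · simp [mem_symmDiff, mem_erase, mem_insert, hx1, hx2]

lemma cs_H3 {i j : ℕ} (hij : i ≠ j) (A B : Finset ℕ) (hA : cs i j A ≠ A) (hB : cs i j B ≠ B)
    (h : cs i j A = cs i j B) : A = B := by
  rw [cs_ne_iff hij] at hA hB
  rw [cs_of_move hA, cs_of_move hB] at h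
  have h2 : (insert i (A.erase j)).erase i = (insert i (B.erase j)).erase i := by rw [h]
  rw [erase_insert (fun hc => hA.2 (mem_of_mem_erase hc)),
    erase_insert (fun hc => hB.2 (mem_of_mem_erase hc))] at h2
  rw [← insert_erase hA.1, ← insert_erase hB.1, h2]



lemma wt_erase_lt {j : ℕ} {A : Finset ℕ} (hj : j ∈ A) : wt (A.erase j) < wt A := by
  unfold wt
  rw [← Finset.sum_erase_add A _ hj]
  omega

lemma wt_insert_erase_lt {i j : ℕ} (hij : i < j) {A : Finset ℕ} (hj : j ∈ A) (hi : i ∉ A) :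
    wt (insert i (A.erase j)) < wt A := by
  unfold wt
  rw [Finset.sum_insert (fun hc => hi (mem_of_mem_erase hc)), ← Finset.sum_erase_add A _ hj]
  omega

lemma mu_famC_lt {c : Finset ℕ → Finset ℕ} {F : Finset (Finset ℕ)}
    (hinj : ∀ A B, c A ≠ A → c B ≠ B → c A = c B → A = B)
    (hwt : ∀ A, c A ≠ A → wt (c A) < wt A)
    (hne : famC c F ≠ F) : mu (famC c F) < mu F := by
  classical
  have hdisj : Disjoint (F.filter (fun A => c A ∈ F)) ((F.filter (fun A => c A ∉ F)).image c) := by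
    rw [disjoint_right]
    rintro X hX hX2
    obtain ⟨B, hB, rfl⟩ := mem_image.1 hX
    exact (mem_filter.1 hB).2 (mem_filter.1 hX2).1
  have hmoved : (F.filter (fun A => c A ∉ F)).Nonempty := by
    rcases Finset.eq_empty_or_nonempty (F.filter (fun A => c A ∉ F)) with h | h
    · exfalso
      apply hne
      rw [famC, h, image_empty, union_empty]
      have : F.filter (fun A => c A ∈ F) = F := by
        apply filter_true_of_mem
        intro A hA
        by_contra hc
        have : A ∈ F.filter (fun A => c A ∉ F) := mem_filter.2 ⟨hA, hc⟩
        simp [h] at this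
      rw [this]
    · exact h
  have hminj : Set.InjOn c (F.filter (fun A => c A ∉ F)) := by
    intro A hA B hB hAB
    simp only [coe_filter, Set.mem_setOf_eq] at hA hB
    have h1 : c A ≠ A := fun h => hA.2 (by rw [h]; exact hA.1)
    have h2 : c B ≠ B := fun h => hB.2 (by rw [h]; exact hB.1)
    exact hinj A B h1 h2 hAB
  calc mu (famC c F)
      = ∑ A ∈ F.filter (fun A => c A ∈ F), wt A
        + ∑ X ∈ (F.filter (fun A => c A ∉ F)).image c, wt X := by
        unfold mu famC; rw [sum_union hdisj]
    _ = ∑ A ∈ F.filter (fun A => c A ∈ F), wt A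
        + ∑ A ∈ F.filter (fun A => c A ∉ F), wt (c A) := by
        rw [sum_image hminj]
    _ < ∑ A ∈ F.filter (fun A => c A ∈ F), wt A
        + ∑ A ∈ F.filter (fun A => c A ∉ F), wt A := by
        apply Nat.add_lt_add_left
        apply Finset.sum_lt_sum_of_nonempty hmoved
        intro A hA
        simp only [mem_filter] at hA
        exact hwt A (fun h => hA.2 (by rw [h]; exact hA.1))
    _ = mu F := by
        unfold mu
        rw [← sum_union (disjoint_filter_filter_not F F _), filter_union_filter_not_eq]

lemma famC_stable_mem {c : Finset ℕ → Finset ℕ} {F : Finset (Finset ℕ)}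
    (h : famC c F = F) {A : Finset ℕ} (hA : A ∈ F) : c A ∈ F := by
  by_contra hc
  have : c A ∈ famC c F := by
    apply mem_union_right
    exact mem_image.2 ⟨A, mem_filter.2 ⟨hA, hc⟩, rfl⟩
  rw [h] at this
  exact hc this


def DownClosed (F : Finset (Finset ℕ)) : Prop := ∀ A ∈ F, ∀ B ⊆ A, B ∈ F
def Shifted (F : Finset (Finset ℕ)) : Prop :=
  ∀ A ∈ F, ∀ i j : ℕ, i < j → j ∈ A → i ∉ A → insert i (A.erase j) ∈ F

lemma cd_range {M : ℕ} (j : ℕ) : ∀ A : Finset ℕ, A ⊆ range M → cd j A ⊆ range M :=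
  fun _ hA => (erase_subset _ _).trans hA

lemma cs_range {M i j : ℕ} (hij : i < j) : ∀ A : Finset ℕ, A ⊆ range M → cs i j A ⊆ range M := by
  intro A hA
  unfold cs
  split_ifs with h
  · intro x hx
    rcases mem_insert.1 hx with rfl | hx2
    · exact mem_range.2 (hij.trans (mem_range.1 (hA h.1)))
    · exact hA (mem_of_mem_erase hx2)
  · exact hA

lemma cs_wt {i j : ℕ} (hij : i < j) : ∀ A, cs i j A ≠ A → wt (cs i j A) < wt A := by
  intro A hA
  have h := (cs_ne_iff hij.ne).1 hA
  rw [cs_of_move h]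
  exact wt_insert_erase_lt hij h.1 h.2

lemma cd_wt (j : ℕ) : ∀ A, cd j A ≠ A → wt (cd j A) < wt A := by
  intro A hA; exact wt_erase_lt (cd_ne_iff.1 hA)

def StableAll (F : Finset (Finset ℕ)) : Prop :=
  (∀ j, famC (cd j) F = F) ∧ (∀ i j : ℕ, i < j → famC (cs i j) F = F)

lemma unstable_step {M d : ℕ} {F : Finset (Finset ℕ)} (hF : ∀ A ∈ F, A ⊆ range M)
    (hd : Diam d F) (h : ¬ StableAll F) :
    ∃ F', F'.card = F.card ∧ (∀ A ∈ F', A ⊆ range M) ∧ Diam d F' ∧ mu F' < mu F := by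
  rcases Classical.em (∀ j, famC (cd j) F = F) with hcd | hcd
  · have h2 : ¬(∀ i j : ℕ, i < j → famC (cs i j) F = F) := fun hh => h ⟨hcd, hh⟩
    push_neg at h2
    obtain ⟨i, j, hij, hne⟩ := h2
    exact ⟨famC (cs i j) F, famC_card (cs_H3 hij.ne), famC_subsets (cs_range hij) hF,
      famC_diam (cs_H1 hij.ne) (cs_H2 hij.ne) hd, mu_famC_lt (cs_H3 hij.ne) (cs_wt hij) hne⟩
  · push_neg at hcd
    obtain ⟨j, hne⟩ := hcd
    exact ⟨famC (cd j) F, famC_card (cd_H3 j), famC_subsets (cd_range j) hF,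
      famC_diam (cd_H1 j) (cd_H2 j) hd, mu_famC_lt (cd_H3 j) (cd_wt j) hne⟩

lemma stable_nice {F : Finset (Finset ℕ)} (hstable : StableAll F) :
    DownClosed F ∧ Shifted F := by
  constructor
  · have down_mem : ∀ A ∈ F, ∀ j : ℕ, A.erase j ∈ F := by
      intro A hA j
      exact famC_stable_mem (hstable.1 j) hA
    have key : ∀ n (A : Finset ℕ), A.card ≤ n → A ∈ F → ∀ B ⊆ A, B ∈ F := by
      intro n
      induction n with
      | zero =>
        intro A hc hA B hB
        have hAe : A = ∅ := card_eq_zero.1 (Nat.le_zero.1 hc)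
        subst hAe
        rwa [subset_empty.1 hB]
      | succ n ih =>
        intro A hc hA B hB
        rcases hB.eq_or_ssubset with rfl | hss
        · exact hA
        · obtain ⟨j, hjA, hjB⟩ := exists_of_ssubset hss
          refine ih (A.erase j) ?_ (down_mem A hA j) B ?_
          · rw [card_erase_of_mem hjA]; omega
          · intro x hx
            exact mem_erase.2 ⟨fun hh => hjB (hh ▸ hx), hB hx⟩
    exact fun A hA B hB => key A.card A le_rfl hA B hB
  · intro A hA i j hij hj hi
    have := famC_stable_mem (hstable.2 i j hij) hA
    rwa [cs_of_move ⟨hj, hi⟩] at this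

lemma exists_nice (M d : ℕ) : ∀ N (F : Finset (Finset ℕ)), mu F ≤ N →
    (∀ A ∈ F, A ⊆ range M) → Diam d F →
    ∃ G : Finset (Finset ℕ), G.card = F.card ∧ (∀ A ∈ G, A ⊆ range M) ∧ Diam d G ∧
      DownClosed G ∧ Shifted G := by
  intro N
  induction N with
  | zero =>
    intro F hmu hF hd
    by_cases hstable : StableAll F
    · obtain ⟨h1, h2⟩ := stable_nice hstable
      exact ⟨F, rfl, hF, hd, h1, h2⟩
    · obtain ⟨F', _, _, _, hlt⟩ := unstable_step hF hd hstable
      omega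
  | succ N ih =>
    intro F hmu hF hd
    by_cases hstable : StableAll F
    · obtain ⟨h1, h2⟩ := stable_nice hstable
      exact ⟨F, rfl, hF, hd, h1, h2⟩
    · obtain ⟨F', hc, hsub, hdiam, hlt⟩ := unstable_step hF hd hstable
      obtain ⟨G, hGc, hG2, hG3, hG4, hG5⟩ := ih F' (by omega) hsub hdiam
      exact ⟨G, hGc.trans hc, hG2, hG3, hG4, hG5⟩

lemma sumPascal (m : ℕ) : ∀ s : ℕ, ∑ i ∈ range (s+1), (m+1).choose i
    = ∑ i ∈ range (s+1), m.choose i + ∑ i ∈ range s, m.choose i := by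
  intro s
  induction s with
  | zero => simp
  | succ s ih =>
    rw [sum_range_succ, ih, Nat.choose_succ_succ]
    conv_rhs => rw [sum_range_succ, sum_range_succ]
    have h3 := sum_range_succ (fun i => m.choose i) s
    simp only [Nat.succ_eq_add_one] at *
    omega

lemma sumHalf (m s : ℕ) : ∑ i ∈ range (s+1), (m+1).choose i + m.choose s
    = 2 * ∑ i ∈ range (s+1), m.choose i := by
  have h := sumPascal m s
  have h2 : ∑ i ∈ range (s+1), m.choose i = ∑ i ∈ range s, m.choose i + m.choose s :=
    sum_range_succ _ _
  omega

lemma antipodal {M : ℕ} {F : Finset (Finset ℕ)} (hF : ∀ A ∈ F, A ⊆ range M)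
    (hd : ∀ A ∈ F, ∀ B ∈ F, (A ∆ B).card < M) : 2 * F.card ≤ 2 ^ M := by
  classical
  have key : ∀ C : Finset ℕ, C ⊆ range M → range M \ (range M \ C) = C := by
    intro C hC
    rw [sdiff_sdiff_right_self]
    exact inf_eq_right.2 hC
  set G := F.image (fun A => range M \ A) with hG
  have hGcard : G.card = F.card := by
    apply card_image_of_injOn
    intro A hA B hB hAB
    dsimp only at hAB
    rw [← key A (hF A hA), ← key B (hF B hB), hAB]
  have hdisj : Disjoint F G := by
    rw [disjoint_right]
    rintro X hX hXF
    obtain ⟨B, hB, rfl⟩ := mem_image.1 hX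
    have hsd : (range M \ B) ∆ B = range M := by
      ext x
      simp only [mem_symmDiff, mem_sdiff, mem_range]
      constructor
      · rintro (⟨⟨h1, _⟩, _⟩ | ⟨h1, _⟩)
        · exact h1
        · exact mem_range.1 (hF B hB h1)
      · intro hx
        by_cases hxB : x ∈ B
        · exact Or.inr ⟨hxB, fun hc => hc.2 hxB⟩
        · exact Or.inl ⟨⟨hx, hxB⟩, hxB⟩
    have := hd _ hXF B hB
    rw [hsd, card_range] at this
    omega
  have hunion : F ∪ G ⊆ (range M).powerset := by
    intro X hX
    rcases mem_union.1 hX with h | h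
    · exact mem_powerset.2 (hF X h)
    · obtain ⟨B, _, rfl⟩ := mem_image.1 h
      exact mem_powerset.2 sdiff_subset
  have := card_le_card hunion
  rw [card_union_of_disjoint hdisj, card_powerset, card_range, hGcard] at this
  omega

lemma key_diam {M s : ℕ} {G : Finset (Finset ℕ)} (hGsub : ∀ A ∈ G, A ⊆ range (M+1))
    (hGd : Diam (2*s) G) (hdown : DownClosed G) (hshift : Shifted G)
    (hM : 2*s+1 ≤ M) :
    ∀ A B : Finset ℕ, insert M A ∈ G → M ∉ A → insert M B ∈ G → M ∉ B →
      (A ∆ B).card ≤ 2*s - 2 := by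
  intro A B hAG hMA hBG hMB
  by_contra hcon
  have hAB : 2*s - 1 ≤ (A ∆ B).card := by omega
  have hArange : A ⊆ range M := by
    intro x hx
    have := mem_range.1 (hGsub _ hAG (mem_insert_of_mem hx))
    rw [mem_range]
    rcases Nat.lt_succ_iff_lt_or_eq.1 this with h | rfl
    · exact h
    · exact absurd hx hMA
  have hBrange : B ⊆ range M := by
    intro x hx
    have := mem_range.1 (hGsub _ hBG (mem_insert_of_mem hx))
    rw [mem_range]
    rcases Nat.lt_succ_iff_lt_or_eq.1 this with h | rfl
    · exact h
    · exact absurd hx hMB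
  -- step 1 : |A ∪ B| ≤ 2s
  have hC : insert M (A \ B) ∈ G := by
    apply hdown _ hAG
    intro x hx
    rcases mem_insert.1 hx with rfl | hx2
    · exact mem_insert_self _ _
    · exact mem_insert_of_mem (mem_sdiff.1 hx2).1
  have hCD : insert M (A \ B) ∆ insert M B = A ∪ B := by
    ext x
    by_cases hx : x = M
    · subst hx
      simp [mem_symmDiff, hMA, hMB]
    · simp only [mem_symmDiff, mem_insert, mem_union, mem_sdiff, hx, false_or]
      by_cases hxB : x ∈ B <;> by_cases hxA : x ∈ A <;> tauto
  have hstep1 : (A ∪ B).card ≤ 2*s := by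
    rw [← hCD]
    exact hGd _ hC _ hBG
  -- step 2 : a fresh element j < M
  have hfresh : (range M \ (A ∪ B)).Nonempty := by
    rw [← card_pos, card_sdiff_of_subset (union_subset hArange hBrange), card_range]
    omega
  obtain ⟨j, hj⟩ := hfresh
  rw [mem_sdiff, mem_range, mem_union] at hj
  push_neg at hj
  have hjM := hj.1
  have hjA := hj.2.1
  have hjB := hj.2.2
  have hjMne : j ≠ M := Nat.ne_of_lt hjM
  -- step 3 : insert j B ∈ G
  have hY : insert j B ∈ G := by
    have := hshift _ hBG j M hjM (mem_insert_self _ _)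
      (by simp only [mem_insert]; push_neg; exact ⟨hjMne, hjB⟩)
    rwa [erase_insert hMB] at this
  -- step 4 : contradiction
  have h1 : j ∉ A ∆ B := by simp [mem_symmDiff, hjA, hjB]
  have h2 : M ∉ insert j (A ∆ B) := by
    simp [mem_symmDiff, hMA, hMB, Ne.symm hjMne]
  have hXY : insert M A ∆ insert j B = insert M (insert j (A ∆ B)) := by
    ext x
    by_cases hx1 : x = M
    · subst hx1
      simp [mem_symmDiff, hMB, Ne.symm hjMne]
    · by_cases hx2 : x = j
      · subst hx2
        simp [mem_symmDiff, hjA, hjMne]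
      · simp only [mem_symmDiff, mem_insert, hx1, hx2, false_or]
        try tauto
  have hcard : (insert M A ∆ insert j B).card = (A ∆ B).card + 2 := by
    rw [hXY, card_insert_of_notMem h2, card_insert_of_notMem h1]
  have := hGd _ hAG _ hY
  rw [hcard] at this
  omega

theorem evenKleitman : ∀ M : ℕ, ∀ s : ℕ, ∀ F : Finset (Finset ℕ),
    (∀ A ∈ F, A ⊆ range M) → 2*s+1 ≤ M → Diam (2*s) F →
    F.card ≤ ∑ i ∈ range (s+1), M.choose i := by
  intro M
  induction M with
  | zero => intro s F _ h2 _; omega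
  | succ M ih =>
    intro s F hF hM hd
    rcases Nat.eq_zero_or_pos s with rfl | hs
    · -- diameter 0 : at most one set
      have hcard : F.card ≤ 1 := by
        rw [card_le_one]
        intro a ha b hb
        have h0 := hd a ha b hb
        have : a ∆ b = ⊥ := card_eq_zero.1 (by omega)
        exact symmDiff_eq_bot.1 this
      simpa using hcard
    · rcases eq_or_lt_of_le hM with heq | hlt
      · -- M + 1 = 2s + 1 : antipodal pairing
        have hd2 : ∀ A ∈ F, ∀ B ∈ F, (A ∆ B).card < M+1 := by
          intro A hA B hB
          have := hd A hA B hB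
          omega
        have h2 := antipodal hF hd2
        have heq2 : M = 2*s := by omega
        subst heq2
        have hhalf := Nat.sum_range_choose_halfway s
        have hp : (2:ℕ)^(2*s+1) = 2 * 4^s := by
          rw [pow_succ, show (4:ℕ) = 2^2 by norm_num, ← pow_mul]
          exact Nat.mul_comm _ _
        rw [show (2*s+1) = 2*s+1 from rfl] at h2
        omega
      · -- inductive step via compression
        obtain ⟨G, hGcard, hGsub, hGd, hGdown, hGshift⟩ :=
          exists_nice (M+1) (2*s) (mu F) F le_rfl hF hd
        rw [← hGcard]
        classical
        set F0 := G.filter (fun A => M ∉ A) with hF0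
        set F1 := (G.filter (fun A => M ∈ A)).image (fun A => A.erase M) with hF1
        have hmemF1 : ∀ X ∈ F1, insert M X ∈ G ∧ M ∉ X ∧ X ⊆ range M := by
          intro X hX
          obtain ⟨Y, hY, rfl⟩ := mem_image.1 hX
          have hYG := (mem_filter.1 hY).1
          have hMY := (mem_filter.1 hY).2
          refine ⟨by rwa [insert_erase hMY], notMem_erase _ _, ?_⟩
          intro x hx
          have := mem_range.1 (hGsub Y hYG (mem_of_mem_erase hx))
          rw [mem_range]
          rcases Nat.lt_succ_iff_lt_or_eq.1 this with h | rfl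
          · exact h
          · exact absurd rfl (mem_erase.1 hx).1
        have hsplit : G.card = F0.card + F1.card := by
          rw [hF0, hF1, card_image_of_injOn]
          · rw [Nat.add_comm, card_filter_add_card_filter_not (p := fun A => M ∈ A)]
          · intro A hA B hB hAB
            simp only [coe_filter, Set.mem_setOf_eq] at hA hB
            dsimp only at hAB
            rw [← insert_erase hA.2, ← insert_erase hB.2, hAB]
        have hbound0 : F0.card ≤ ∑ i ∈ range (s+1), M.choose i := by
          apply ih s F0
          · intro A hA
            have hsub := hGsub A (mem_filter.1 hA).1
            have hMA := (mem_filter.1 hA).2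
            intro x hx
            have := mem_range.1 (hsub hx)
            rw [mem_range]
            rcases Nat.lt_succ_iff_lt_or_eq.1 this with h | rfl
            · exact h
            · exact absurd hx hMA
          · omega
          · intro A hA B hB
            exact hGd A (mem_filter.1 hA).1 B (mem_filter.1 hB).1
        obtain ⟨t, rfl⟩ : ∃ t, s = t + 1 := ⟨s - 1, by omega⟩
        have hbound1 : F1.card ≤ ∑ i ∈ range (t+1), M.choose i := by
          apply ih t F1
          · intro A hA
            exact (hmemF1 A hA).2.2
          · omega
          · intro A hA B hB
            obtain ⟨hA1, hA2, _⟩ := hmemF1 A hA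
            obtain ⟨hB1, hB2, _⟩ := hmemF1 B hB
            have := key_diam hGsub hGd hGdown hGshift (by omega) A B hA1 hA2 hB1 hB2
            omega
        rw [sumPascal]
        omega

lemma sd_eq_union_sdiff_inter (A B : Finset ℕ) : A ∆ B = (A ∪ B) \ (A ∩ B) := by
  ext x
  simp only [mem_symmDiff, mem_sdiff, mem_union, mem_inter]
  tauto

lemma card_sd_identity (A B : Finset ℕ) :
    (A ∆ B).card + 2 * (A ∩ B).card = A.card + B.card := by
  have h1 : (A ∩ B) ⊆ (A ∪ B) := (inter_subset_left).trans subset_union_left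
  have h2 := card_union_add_card_inter A B
  rw [sd_eq_union_sdiff_inter, card_sdiff_of_subset h1]
  have h3 := card_le_card h1
  omega

/-- bound for a family of fixed size-parity of diameter `2s+1` inside `range (M+1)` -/
lemma class_bound {M s : ℕ} {P : Finset (Finset ℕ)} (hsub : ∀ A ∈ P, A ⊆ range (M+1))
    (hM : 2*s+1 ≤ M) (hd : Diam (2*s+1) P)
    (hpar : ∀ A ∈ P, ∀ B ∈ P, A.card % 2 = B.card % 2) :
    P.card ≤ ∑ i ∈ range (s+1), M.choose i := by
  classical
  have hEven : ∀ A ∈ P, ∀ B ∈ P, (A ∆ B).card % 2 = 0 := by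
    intro A hA B hB
    have := card_sd_identity A B
    have := hpar A hA B hB
    omega
  set P' := P.image (fun A => A.erase M) with hP'
  have hcard : P'.card = P.card := by
    apply card_image_of_injOn
    intro A hA B hB hAB
    dsimp only at hAB
    by_cases hMA : M ∈ A
    · by_cases hMB : M ∈ B
      · rw [← insert_erase hMA, ← insert_erase hMB, hAB]
      · exfalso
        have hsd : A ∆ B = {M} := by
          ext x
          by_cases hx : x = M
          · subst hx; simp [mem_symmDiff, hMA, hMB]
          · simp only [mem_symmDiff, mem_singleton, hx, iff_false]
            have hxa : x ∈ A ↔ x ∈ A.erase M := by simp [mem_erase, hx]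
            have hxb : x ∈ B ↔ x ∈ B.erase M := by simp [mem_erase, hx]
            rw [hxa, hxb, hAB]
            tauto
        have := hEven A hA B hB
        rw [hsd, card_singleton] at this
        omega
    · by_cases hMB : M ∈ B
      · exfalso
        have hsd : A ∆ B = {M} := by
          ext x
          by_cases hx : x = M
          · subst hx; simp [mem_symmDiff, hMA, hMB]
          · simp only [mem_symmDiff, mem_singleton, hx, iff_false]
            have hxa : x ∈ A ↔ x ∈ A.erase M := by simp [mem_erase, hx]
            have hxb : x ∈ B ↔ x ∈ B.erase M := by simp [mem_erase, hx]
            rw [hxa, hxb, hAB]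
            tauto
        have := hEven A hA B hB
        rw [hsd, card_singleton] at this
        omega
      · rwa [erase_eq_of_notMem hMA, erase_eq_of_notMem hMB] at hAB
  rw [← hcard]
  apply evenKleitman M s P'
  · intro X hX
    obtain ⟨A, hA, rfl⟩ := mem_image.1 hX
    intro x hx
    have := mem_range.1 (hsub A hA (mem_of_mem_erase hx))
    rw [mem_range]
    rcases Nat.lt_succ_iff_lt_or_eq.1 this with h | rfl
    · exact h
    · exact absurd rfl (mem_erase.1 hx).1
  · omega
  · intro X hX Y hY
    obtain ⟨A, hA, rfl⟩ := mem_image.1 hX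
    obtain ⟨B, hB, rfl⟩ := mem_image.1 hY
    have hss : A.erase M ∆ B.erase M = (A ∆ B).erase M := by
      ext x
      simp only [mem_symmDiff, mem_erase]
      tauto
    have h1 : ((A ∆ B).erase M).card ≤ (A ∆ B).card := card_le_card (erase_subset _ _)
    have h2 := hd A hA B hB
    have h3 := hEven A hA B hB
    rw [hss]
    omega

/-- Kleitman's theorem, odd case, for set families. -/
theorem oddKleitman {M s : ℕ} {F : Finset (Finset ℕ)} (hF : ∀ A ∈ F, A ⊆ range (M+1))
    (hM : 2*s+1 ≤ M) (hd : Diam (2*s+1) F) :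
    F.card ≤ 2 * ∑ i ∈ range (s+1), M.choose i := by
  classical
  have h0 : (F.filter (fun A => A.card % 2 = 0)).card ≤ ∑ i ∈ range (s+1), M.choose i := by
    apply class_bound (fun A hA => hF A (mem_filter.1 hA).1) hM
      (fun A hA B hB => hd A (mem_filter.1 hA).1 B (mem_filter.1 hB).1)
    intro A hA B hB
    rw [(mem_filter.1 hA).2, (mem_filter.1 hB).2]
  have h1 : (F.filter (fun A => ¬ A.card % 2 = 0)).card ≤ ∑ i ∈ range (s+1), M.choose i := by
    apply class_bound (fun A hA => hF A (mem_filter.1 hA).1) hM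
      (fun A hA B hB => hd A (mem_filter.1 hA).1 B (mem_filter.1 hB).1)
    intro A hA B hB
    have ha := (mem_filter.1 hA).2
    have hb := (mem_filter.1 hB).2
    omega
  have hsum := card_filter_add_card_filter_not (s := F) (p := fun A => A.card % 2 = 0)
  omega

section Dictionary
variable {n : ℕ}

lemma hamming_filter (x y : Fin n → ZMod 2) :
    hammingDist x y = (univ.filter (fun i => x i ≠ y i)).card := by
  rw [hammingDist]

def vsupp (x : Fin n → ZMod 2) : Finset ℕ :=
  (univ.filter (fun i => x i = 1)).image Fin.val

lemma mem_vsupp {x : Fin n → ZMod 2} {i : Fin n} : (i : ℕ) ∈ vsupp x ↔ x i = 1 := by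
  simp only [vsupp, mem_image, mem_filter, mem_univ, true_and]
  constructor
  · rintro ⟨j, h1, h2⟩
    rwa [← Fin.val_injective h2]
  · intro h
    exact ⟨i, h, rfl⟩

lemma vsupp_subset (x : Fin n → ZMod 2) : vsupp x ⊆ range n := by
  intro a ha
  obtain ⟨i, _, rfl⟩ := mem_image.1 ha
  exact mem_range.2 i.isLt

lemma vsupp_inj : Function.Injective (vsupp (n := n)) := by
  intro x y h
  funext i
  have h1 : ((i : ℕ) ∈ vsupp x) ↔ ((i : ℕ) ∈ vsupp y) := by rw [h]
  rw [mem_vsupp, mem_vsupp] at h1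
  have : ∀ a b : ZMod 2, (a = 1 ↔ b = 1) → a = b := by decide
  exact this _ _ h1

lemma image_sd (S T : Finset (Fin n)) :
    (S ∆ T).image (Fin.val) = S.image Fin.val ∆ T.image Fin.val := by
  rw [symmDiff_def, symmDiff_def, sup_eq_union, sup_eq_union, image_union,
    Finset.image_sdiff _ _ Fin.val_injective, Finset.image_sdiff _ _ Fin.val_injective]

lemma hamming_vsupp (x y : Fin n → ZMod 2) :
    hammingDist x y = (vsupp x ∆ vsupp y).card := by
  have hfilters : (univ.filter (fun i => x i = 1)) ∆ (univ.filter (fun i => y i = 1))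
      = univ.filter (fun i => x i ≠ y i) := by
    ext i
    simp only [mem_symmDiff, mem_filter, mem_univ, true_and]
    have : ∀ a b : ZMod 2, ((a = 1 ∧ ¬ b = 1) ∨ (b = 1 ∧ ¬ a = 1)) ↔ a ≠ b := by decide
    exact this _ _
  rw [vsupp, vsupp, ← image_sd, card_image_of_injective _ Fin.val_injective, hfilters,
    hamming_filter]

end Dictionary

section Ball
variable {n : ℕ}

lemma zmod_ne_add_one : ∀ a : ZMod 2, a ≠ a + 1 := by decide
lemma zmod_add_one_of_ne : ∀ a b : ZMod 2, a ≠ b → a + 1 = b := by decide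
lemma zmod_eq_of_ne_ne : ∀ a b c : ZMod 2, a ≠ b → c ≠ a → c = b := by decide

/-- the filter identity for the inverse map -/
lemma filter_of_indicator (x : Fin n → ZMod 2) (T : Finset (Fin n)) :
    univ.filter (fun j => x j ≠ (x j + if j ∈ T then 1 else 0)) = T := by
  ext j
  by_cases h : j ∈ T
  · simp [h, zmod_ne_add_one (x j)]
  · simp [h]

lemma ballCount (x : Fin n → ZMod 2) (i : Fin n) (s : ℕ) :
    (univ.filter (fun z : Fin n → ZMod 2 => hammingDist x z ≤ s ∧ z i = x i)).card
      = ∑ k ∈ range (s+1), (n-1).choose k := by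
  classical
  have tcount : (((univ : Finset (Fin n)).erase i).powerset.filter (fun T => T.card ≤ s)).card
      = ∑ k ∈ range (s+1), (n-1).choose k := by
    have hsplit : ((univ : Finset (Fin n)).erase i).powerset.filter (fun T => T.card ≤ s)
        = (range (s+1)).biUnion (fun k => ((univ : Finset (Fin n)).erase i).powersetCard k) := by
      ext T
      simp only [mem_filter, mem_powerset, mem_biUnion, mem_range, mem_powersetCard]
      constructor
      · rintro ⟨h1, h2⟩
        exact ⟨T.card, by omega, h1, rfl⟩
      · rintro ⟨k, hk, h1, rfl⟩
        exact ⟨h1, by omega⟩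
    rw [hsplit, card_biUnion]
    · apply Finset.sum_congr rfl
      intro k _
      rw [card_powersetCard, card_erase_of_mem (mem_univ i), card_univ, Fintype.card_fin]
    · intro a _ b _ hab
      simp only [disjoint_left, mem_powersetCard]
      rintro T ⟨_, h1⟩ ⟨_, h2⟩
      exact hab (by rw [← h1, ← h2])
  rw [← tcount]
  apply card_bij' (i := fun z _ => univ.filter (fun j => x j ≠ z j))
    (j := fun T _ => fun j => x j + if j ∈ T then 1 else 0)
  · -- hi
    intro z hz
    simp only [mem_filter, mem_univ, true_and] at hz
    simp only [mem_filter, mem_powerset]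
    constructor
    · intro j hj
      simp only [mem_filter, mem_univ, true_and] at hj
      apply mem_erase.2
      refine ⟨?_, mem_univ j⟩
      rintro rfl
      exact hj hz.2.symm
    · rw [← hamming_filter]
      exact hz.1
  · -- hj
    intro T hT
    simp only [mem_filter, mem_powerset] at hT
    simp only [mem_filter, mem_univ, true_and]
    constructor
    · rw [hamming_filter, filter_of_indicator]
      exact hT.2
    · have : i ∉ T := fun hc => (mem_erase.1 (hT.1 hc)).1 rfl
      simp [this]
  · -- left inverse
    intro z hz
    funext j
    simp only [mem_filter, mem_univ, true_and]
    by_cases h : x j ≠ z j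
    · rw [if_pos h]
      exact zmod_add_one_of_ne _ _ h
    · rw [if_neg h, add_zero]
      push_neg at h
      exact h
  · -- right inverse
    intro T hT
    exact filter_of_indicator x T

end Ball

end Kleitman16

open Finset symmDiff Kleitman16 in
theorem stmt_16 (n s : ℕ) (hn : 2 * s + 1 < n - 1) :
    (∀ A : Finset (Fin n → ZMod 2),
      (∀ x ∈ A, ∀ y ∈ A, hammingDist x y ≤ 2 * s + 1) →
        A.card ≤ (∑ i ∈ Finset.range (s + 1), n.choose i) + (n - 1).choose s) ∧
      ∀ x y : Fin n → ZMod 2, hammingDist x y = 1 →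
        ((Finset.univ.filter (fun z : Fin n → ZMod 2 => hammingDist x z ≤ s)) ∪
          (Finset.univ.filter (fun z : Fin n → ZMod 2 => hammingDist y z ≤ s))).card =
          (∑ i ∈ Finset.range (s + 1), n.choose i) + (n - 1).choose s := by
  classical
  obtain ⟨M, rfl⟩ : ∃ M, n = M + 1 := ⟨n - 1, by omega⟩
  have hM : 2*s+1 ≤ M := by omega
  have hid := Kleitman16.sumHalf M s
  constructor
  · -- Kleitman's bound
    intro A hA
    have hcard : (A.image vsupp).card = A.card := card_image_of_injective _ vsupp_inj
    have hsub : ∀ X ∈ A.image vsupp, X ⊆ range (M+1) := by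
      intro X hX
      obtain ⟨x, _, rfl⟩ := mem_image.1 hX
      exact vsupp_subset x
    have hdiam : Diam (2*s+1) (A.image vsupp) := by
      intro X hX Y hY
      obtain ⟨x, hx, rfl⟩ := mem_image.1 hX
      obtain ⟨y, hy, rfl⟩ := mem_image.1 hY
      rw [← hamming_vsupp]
      exact hA x hx y hy
    have hbound := oddKleitman hsub hM hdiam
    rw [hcard] at hbound
    simp only [Nat.add_sub_cancel]
    omega
  · -- cardinality of a union of two balls at distance 1
    intro x y hxy
    rw [hamming_filter] at hxy
    obtain ⟨i, hi⟩ := card_eq_one.1 hxy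
    have hxyi : x i ≠ y i := by
      have : i ∈ univ.filter (fun j => x j ≠ y j) := by
        rw [hi]; exact mem_singleton_self i
      exact (mem_filter.1 this).2
    have hagree : ∀ j : Fin (M+1), j ≠ i → x j = y j := by
      intro j hj
      by_contra hc
      have : j ∈ ({i} : Finset (Fin (M+1))) := hi ▸ (mem_filter.2 ⟨mem_univ j, hc⟩)
      exact hj (mem_singleton.1 this)
    -- distance shift along the switch coordinate
    have hshift : ∀ u v : Fin (M+1) → ZMod 2, u i ≠ v i → (∀ j : Fin (M+1), j ≠ i → u j = v j) →
        ∀ z : Fin (M+1) → ZMod 2, z i = u i → hammingDist v z = hammingDist u z + 1 := by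
      intro u v huv hagr z hz
      rw [hamming_filter, hamming_filter]
      have hins : univ.filter (fun j => v j ≠ z j) = insert i (univ.filter (fun j => u j ≠ z j)) := by
        ext j
        by_cases hj : j = i
        · subst hj
          simp [hz, Ne.symm huv]
        · simp only [mem_filter, mem_univ, true_and, mem_insert, hj, false_or]
          rw [hagr j hj]
      rw [hins, card_insert_of_notMem]
      simp [hz]
    have hdx := hshift x y hxyi hagree
    have hdy := hshift y x (Ne.symm hxyi) (fun j hj => (hagree j hj).symm)
    have hunion : (univ.filter (fun z : Fin (M+1) → ZMod 2 => hammingDist x z ≤ s))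
        ∪ (univ.filter (fun z => hammingDist y z ≤ s))
        = (univ.filter (fun z => hammingDist x z ≤ s ∧ z i = x i))
          ∪ (univ.filter (fun z => hammingDist y z ≤ s ∧ z i = y i)) := by
      ext z
      simp only [mem_union, mem_filter, mem_univ, true_and]
      by_cases hz : z i = x i
      · have hd := hdx z hz
        constructor
        · rintro (h | h)
          · exact Or.inl ⟨h, hz⟩
          · exact Or.inl ⟨by omega, hz⟩
        · rintro (⟨h, _⟩ | ⟨h, _⟩)
          · exact Or.inl h
          · exact Or.inr h
      · have hzy : z i = y i := zmod_eq_of_ne_ne (x i) (y i) (z i) hxyi hz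
        have hd := hdy z hzy
        constructor
        · rintro (h | h)
          · exact Or.inr ⟨by omega, hzy⟩
          · exact Or.inr ⟨h, hzy⟩
        · rintro (⟨h, _⟩ | ⟨h, _⟩)
          · exact Or.inl h
          · exact Or.inr h
    have hdisj : Disjoint
        (univ.filter (fun z : Fin (M+1) → ZMod 2 => hammingDist x z ≤ s ∧ z i = x i))
        (univ.filter (fun z => hammingDist y z ≤ s ∧ z i = y i)) := by
      rw [disjoint_left]
      intro z hz1 hz2
      have h1 := (mem_filter.1 hz1).2.2
      have h2 := (mem_filter.1 hz2).2.2
      exact hxyi (h1 ▸ h2 ▸ rfl)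
    rw [hunion, card_union_of_disjoint hdisj, ballCount x i s, ballCount y i s]
    simp only [Nat.add_sub_cancel]
    omega
end
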